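/- arXiv:0706.4450 — 10 statements merged into one kernel-verified Lean document; each statement's English description precedes it below -/
import Mathlib

section
/- Let H be a separable Hilbert space and X ∈ L²(Ω;H). The distortion function D_N(x₁,…,x_N) = E( min_{1≤i≤N} |X − x_i|²_H ) is lower semicontinuous on H^N for the product weak topology. -/
open MeasureTheory Filter Finset Topology

private lemma meas_finset_inf' {δ ι : Type*} [MeasurableSpace δ] {s : Finset ι}
    (hs : s.Nonempty) {f : ι → δ → ℝ} :
    (∀ i ∈ s, Measurable (f i)) → Measurable fun x => s.inf' hs fun i => f i x := by
  induction hs using Finset.Nonempty.cons_induction with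
  | singleton a => intro hf; simpa using hf a (by simp)
  | cons a s ha hs ih =>
      intro hf
      have hrw : (fun x => (Finset.cons a s ha).inf' (Finset.cons_nonempty ha) fun i => f i x)
          = fun x => f a x ⊓ (s.inf' hs fun i => f i x) :=
        funext fun x => Finset.inf'_cons hs (fun i => f i x)
      rw [hrw]
      exact (hf a (by simp)).inf (ih fun i hi => hf i (by simp [hi]))

private lemma meas_finset_sup' {δ ι : Type*} [MeasurableSpace δ] {s : Finset ι}
    (hs : s.Nonempty) {f : ι → δ → ℝ} :
    (∀ i ∈ s, Measurable (f i)) → Measurable fun x => s.sup' hs fun i => f i x := by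
  induction hs using Finset.Nonempty.cons_induction with
  | singleton a => intro hf; simpa using hf a (by simp)
  | cons a s ha hs ih =>
      intro hf
      have hrw : (fun x => (Finset.cons a s ha).sup' (Finset.cons_nonempty ha) fun i => f i x)
          = fun x => f a x ⊔ (s.sup' hs fun i => f i x) :=
        funext fun x => Finset.sup'_cons hs (fun i => f i x)
      rw [hrw]
      exact (hf a (by simp)).sup (ih fun i hi => hf i (by simp [hi]))

/-- The partial suprema `sup_{k ≤ n} (‖u‖² - ‖u - v k‖²)` tend to `‖u‖²` when `v` has
dense range. -/
private lemma sup'_tendsto_sq {H : Type*} [NormedAddCommGroup H]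
    {v : ℕ → H} (hv : DenseRange v) (u : H) :
    Tendsto (fun n => (Finset.range (n+1)).sup' Finset.nonempty_range_add_one
        fun k => ‖u‖^2 - ‖u - v k‖^2) atTop (𝓝 (‖u‖^2)) := by
  set s : ℕ → ℝ := fun n => (Finset.range (n+1)).sup' Finset.nonempty_range_add_one
      fun k => ‖u‖^2 - ‖u - v k‖^2 with hs
  have hmono : Monotone s := fun n m h =>
    Finset.sup'_mono _ (Finset.range_subset_range.mpr (by omega)) _
  have hbd : ∀ n, s n ≤ ‖u‖^2 :=
    fun n => Finset.sup'_le _ _ fun k _ => sub_le_self _ (by positivity)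
  have hbdd : BddAbove (Set.range s) := ⟨‖u‖^2, by rintro _ ⟨n, rfl⟩; exact hbd n⟩
  have hsup : (⨆ n, s n) = ‖u‖^2 := by
    refine le_antisymm (ciSup_le hbd) (le_of_forall_lt fun c hc => ?_)
    obtain ⟨k, hk⟩ := hv.exists_dist_lt u
      (show (0:ℝ) < Real.sqrt (‖u‖^2 - c) from Real.sqrt_pos.mpr (by linarith))
    have hk2 : ‖u - v k‖^2 < ‖u‖^2 - c := by
      have h1 : dist u (v k) ^ 2 < Real.sqrt (‖u‖^2 - c) ^ 2 :=
        pow_lt_pow_left₀ hk dist_nonneg (by norm_num)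
      rw [Real.sq_sqrt (by linarith)] at h1
      rwa [dist_eq_norm] at h1
    have h3 : c < s k :=
      lt_of_lt_of_le (by linarith)
        (Finset.le_sup' (fun k => ‖u‖^2 - ‖u - v k‖^2) (Finset.self_mem_range_succ k))
    exact h3.trans_le (le_ciSup hbdd k)
  have h := tendsto_atTop_ciSup hmono hbdd
  rwa [hsup] at h

set_option maxHeartbeats 1000000 in
/-- the distortion `D_N(x₁,…,x_N) = E min_i ‖X - x_i‖²` is lower
semicontinuous on `H^N` for the product of the weak topologies. -/
theorem distortion_weakly_lsc
    {H Ω : Type*} [NormedAddCommGroup H] [InnerProductSpace ℝ H]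
    [TopologicalSpace.SeparableSpace H] [CompleteSpace H]
    [MeasurableSpace H] [BorelSpace H]
    {mΩ : MeasurableSpace Ω} (μ : Measure Ω) [IsProbabilityMeasure μ]
    (X : Ω → H) (hXm : Measurable X)
    (hX2 : Integrable (fun ω => ‖X ω‖ ^ 2) μ)
    (N : ℕ) (hN : 0 < N) :
    LowerSemicontinuous
      (fun x : Fin N → WeakSpace ℝ H =>
        ∫ ω, ⨅ i : Fin N, ‖X ω - (toWeakSpace ℝ H).symm (x i)‖ ^ 2 ∂μ) := by
  haveI : Nonempty (Fin N) := Fin.pos_iff_nonempty.mp hN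
  haveI : Nonempty H := ⟨0⟩
  set i₀ : Fin N := ⟨0, hN⟩ with hi₀
  have hne : (Finset.univ : Finset (Fin N)).Nonempty := ⟨i₀, Finset.mem_univ _⟩
  -- a dense sequence starting with 0
  set v : ℕ → H := fun k => Nat.casesOn k 0 (TopologicalSpace.denseSeq H) with hv
  have hv0 : v 0 = 0 := rfl
  have hvd : DenseRange v := by
    have hd := TopologicalSpace.denseRange_denseSeq H
    refine Dense.mono ?_ hd
    rintro _ ⟨k, rfl⟩
    exact ⟨k + 1, rfl⟩
  set E : WeakSpace ℝ H → H := fun y => (toWeakSpace ℝ H).symm y with hE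
  -- the approximating integrands, as functions of finitely many linear coordinates
  set φ : ℕ → (Fin N → ℕ → ℝ) → Ω → ℝ := fun n t ω =>
    Finset.univ.inf' hne fun i : Fin N =>
      (Finset.range (n+1)).sup' Finset.nonempty_range_add_one fun k =>
        2 * (inner ℝ (v k) (X ω) : ℝ) - 2 * t i k - ‖v k‖^2 with hφ
  set T : (Fin N → WeakSpace ℝ H) → Fin N → ℕ → ℝ :=
    fun x i k => (inner ℝ (v k) (E (x i)) : ℝ) with hT
  set D : (Fin N → WeakSpace ℝ H) → ℝ :=
    fun x => ∫ ω, ⨅ i : Fin N, ‖X ω - E (x i)‖ ^ 2 ∂μ with hD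
  set G : ℕ → (Fin N → WeakSpace ℝ H) → ℝ := fun n x => ∫ ω, φ n (T x) ω ∂μ with hG
  -- the key algebraic identity
  have key : ∀ (w u c : H),
      2 * (inner ℝ w u : ℝ) - 2 * (inner ℝ w c : ℝ) - ‖w‖^2 = ‖u - c‖^2 - ‖u - c - w‖^2 := by
    intro w u c
    have h := norm_sub_sq_real (u - c) w
    have h2 : (inner ℝ (u - c) w : ℝ) = (inner ℝ w u : ℝ) - (inner ℝ w c : ℝ) := by
      rw [inner_sub_left, real_inner_comm u w, real_inner_comm c w]
    linarith
  have hφT : ∀ n x ω, φ n (T x) ω =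
      Finset.univ.inf' hne fun i : Fin N =>
        (Finset.range (n+1)).sup' Finset.nonempty_range_add_one fun k =>
          ‖X ω - E (x i)‖^2 - ‖X ω - E (x i) - v k‖^2 := by
    intro n x ω
    simp only [hφ, hT]
    refine Finset.inf'_congr hne rfl fun i _ => ?_
    refine Finset.sup'_congr Finset.nonempty_range_add_one rfl fun k _ => key _ _ _
  -- basic bounds
  have hφ0 : ∀ n x ω, 0 ≤ φ n (T x) ω := by
    intro n x ω
    rw [hφT]
    refine Finset.le_inf' _ _ fun i _ => ?_
    have h0 : (0:ℝ) = ‖X ω - E (x i)‖^2 - ‖X ω - E (x i) - v 0‖^2 := by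
      simp [hv0]
    rw [h0]
    exact Finset.le_sup' (fun k => ‖X ω - E (x i)‖^2 - ‖X ω - E (x i) - v k‖^2)
      (Finset.mem_range.mpr (Nat.succ_pos n))
  have hφub : ∀ n x ω, φ n (T x) ω ≤ ‖X ω - E (x i₀)‖^2 := by
    intro n x ω
    rw [hφT]
    refine le_trans (Finset.inf'_le _ (Finset.mem_univ i₀)) ?_
    exact Finset.sup'_le _ _ fun k _ => sub_le_self _ (by positivity)
  have hφmono : ∀ t ω, Monotone fun n => φ n t ω := by
    intro t ω n m h
    simp only [hφ]
    refine Finset.le_inf' _ _ fun i hi => ?_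
    refine le_trans (Finset.inf'_le _ (Finset.mem_univ i)) ?_
    exact Finset.sup'_mono _ (Finset.range_subset_range.mpr (by omega)) _
  have hφtend : ∀ x ω, Tendsto (fun n => φ n (T x) ω) atTop
      (𝓝 (⨅ i : Fin N, ‖X ω - E (x i)‖^2)) := by
    intro x ω
    rw [show (fun n => φ n (T x) ω) = fun n =>
        Finset.univ.inf' hne fun i : Fin N =>
          (Finset.range (n+1)).sup' Finset.nonempty_range_add_one fun k =>
            ‖X ω - E (x i)‖^2 - ‖X ω - E (x i) - v k‖^2 from funext fun n => hφT n x ω]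
    rw [← Finset.inf'_univ_eq_ciInf (f := fun i => ‖X ω - E (x i)‖^2)]
    exact Filter.Tendsto.finset_inf'_nhds_apply hne fun i _ => sup'_tendsto_sq hvd _
  -- integrability
  have hX1 : Integrable (fun ω => ‖X ω‖) μ := by
    refine ((integrable_const (1:ℝ)).add hX2).mono' hXm.norm.aestronglyMeasurable
      (ae_of_all _ fun ω => ?_)
    rw [Real.norm_eq_abs, abs_norm]
    simp only [Pi.add_apply]
    nlinarith [sq_nonneg (‖X ω‖ - 1), norm_nonneg (X ω)]
  have hsqint : ∀ c : H, Integrable (fun ω => ‖X ω - c‖^2) μ := by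
    intro c
    refine Integrable.mono' (g := fun ω => ‖X ω‖^2 + 2*‖c‖*‖X ω‖ + ‖c‖^2)
      ((hX2.add (hX1.const_mul _)).add (integrable_const _))
      ((hXm.sub measurable_const).norm.pow_const 2).aestronglyMeasurable
      (ae_of_all _ fun ω => ?_)
    rw [Real.norm_eq_abs, abs_of_nonneg (by positivity)]
    show ‖X ω - c‖^2 ≤ ‖X ω‖^2 + 2*‖c‖*‖X ω‖ + ‖c‖^2
    nlinarith [norm_sub_le (X ω) c, norm_nonneg (X ω), norm_nonneg c,
      norm_nonneg (X ω - c)]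
  have hinner_meas : ∀ k, Measurable fun ω => (inner ℝ (v k) (X ω) : ℝ) :=
    fun k => (Continuous.measurable (innerSL ℝ (v k)).continuous).comp hXm
  have hφmeas : ∀ n t, Measurable (φ n t) := by
    intro n t
    refine meas_finset_inf' hne fun i _ => ?_
    refine meas_finset_sup' Finset.nonempty_range_add_one fun k _ => ?_
    exact (((hinner_meas k).const_mul 2).sub_const _).sub_const _
  have hφint : ∀ n x, Integrable (φ n (T x)) μ := by
    intro n x
    refine (hsqint (E (x i₀))).mono' (hφmeas n (T x)).aestronglyMeasurable
      (ae_of_all _ fun ω => ?_)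
    rw [Real.norm_eq_abs, abs_of_nonneg (hφ0 n x ω)]
    exact hφub n x ω
  have hDmeas : ∀ x : Fin N → WeakSpace ℝ H, Measurable fun ω => ⨅ i : Fin N, ‖X ω - E (x i)‖^2 := by
    intro x
    have hrw : (fun ω => ⨅ i : Fin N, ‖X ω - E (x i)‖^2) =
        fun ω => Finset.univ.inf' hne fun i => ‖X ω - E (x i)‖^2 := by
      funext ω; rw [Finset.inf'_univ_eq_ciInf]
    rw [hrw]
    exact meas_finset_inf' hne fun i _ =>
      ((hXm.sub measurable_const).norm.pow_const 2)
  have hDint : ∀ x : Fin N → WeakSpace ℝ H, Integrable (fun ω => ⨅ i : Fin N, ‖X ω - E (x i)‖^2) μ := by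
    intro x
    refine (hsqint (E (x i₀))).mono' (hDmeas x).aestronglyMeasurable
      (ae_of_all _ fun ω => ?_)
    have h0 : (0:ℝ) ≤ ⨅ i : Fin N, ‖X ω - E (x i)‖^2 :=
      le_ciInf fun i => by positivity
    rw [Real.norm_eq_abs, abs_of_nonneg h0]
    exact ciInf_le (Finite.bddBelow_range _) i₀
  -- monotone convergence
  have hGD : ∀ x, Tendsto (fun n => G n x) atTop (𝓝 (D x)) := by
    intro x
    exact integral_tendsto_of_tendsto_of_monotone (fun n => hφint n x) (hDint x)
      (ae_of_all _ fun ω => hφmono (T x) ω) (ae_of_all _ fun ω => hφtend x ω)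
  have hGmono : ∀ x, Monotone fun n => G n x := by
    intro x n m h
    exact integral_mono (hφint n x) (hφint m x) fun ω => hφmono (T x) ω h
  have hGleD : ∀ n x, G n x ≤ D x := fun n x => (hGmono x).ge_of_tendsto (hGD x) n
  -- continuity of the approximations in the weak topology
  have hTcont : Continuous T := by
    refine continuous_pi fun i => continuous_pi fun k => ?_
    exact (WeakBilin.eval_continuous ((topDualPairing ℝ H).flip)
      (innerSL ℝ (v k))).comp
        (continuous_apply i : Continuous fun p : Fin N → WeakSpace ℝ H => p i)
  have hFcont : ∀ n, Continuous fun t : Fin N → ℕ → ℝ => ∫ ω, φ n t ω ∂μ := by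
    intro n
    rw [continuous_iff_continuousAt]
    intro t₀
    set M : ℝ := (Finset.range (n+1)).sup' Finset.nonempty_range_add_one fun k => ‖v k‖ with hM
    have hMk : ∀ k ∈ Finset.range (n+1), ‖v k‖ ≤ M := fun k hk =>
      Finset.le_sup' (fun k => ‖v k‖) hk
    have hM0 : 0 ≤ M :=
      le_trans (norm_nonneg (v 0)) (hMk 0 (Finset.mem_range.mpr (Nat.succ_pos n)))
    set C : ℝ := Finset.univ.sup' hne fun i : Fin N =>
      (Finset.range (n+1)).sup' Finset.nonempty_range_add_one fun k =>
        2*|t₀ i k| + 2 + ‖v k‖^2 with hC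
    have hCik : ∀ (i : Fin N), ∀ k ∈ Finset.range (n+1),
        2*|t₀ i k| + 2 + ‖v k‖^2 ≤ C := fun i k hk =>
      le_trans (Finset.le_sup' (fun k => 2*|t₀ i k| + 2 + ‖v k‖^2) hk)
        (Finset.le_sup' (fun i : Fin N => (Finset.range (n+1)).sup'
          Finset.nonempty_range_add_one fun k => 2*|t₀ i k| + 2 + ‖v k‖^2) (Finset.mem_univ i))
    refine continuousAt_of_dominated (bound := fun ω => C + 2*M*‖X ω‖)
      (Eventually.of_forall fun t => (hφmeas n t).aestronglyMeasurable) ?_ ?_ ?_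
    · -- eventual domination
      have hev : ∀ᶠ t : Fin N → ℕ → ℝ in 𝓝 t₀,
          ∀ i : Fin N, ∀ k ∈ Finset.range (n+1), |t i k - t₀ i k| < 1 := by
        refine Filter.eventually_all.mpr fun i => ?_
        refine (Filter.eventually_all_finset _).mpr fun k hk => ?_
        have hc : Tendsto (fun t : Fin N → ℕ → ℝ => t i k) (𝓝 t₀) (𝓝 (t₀ i k)) :=
          ((continuous_apply k).comp (continuous_apply i)).continuousAt
        exact hc.eventually (eventually_abs_sub_lt _ one_pos)
      filter_upwards [hev] with t ht
      refine ae_of_all _ fun ω => ?_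
      have habs : ∀ (i : Fin N), ∀ k ∈ Finset.range (n+1), |t i k| ≤ |t₀ i k| + 1 := by
        intro i k hk
        have := ht i k hk
        have h1 := abs_sub_abs_le_abs_sub (t i k) (t₀ i k)
        linarith
      rw [Real.norm_eq_abs, abs_le]
      constructor
      · -- lower bound
        refine neg_le_of_neg_le ?_
        simp only [hφ]
        rw [neg_le]
        refine Finset.le_inf' _ _ fun i _ => ?_
        have h0mem : (0:ℕ) ∈ Finset.range (n+1) := Finset.mem_range.mpr (Nat.succ_pos n)
        refine le_trans ?_ (Finset.le_sup' _ h0mem)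
        have hvz : 2 * (inner ℝ (v 0) (X ω) : ℝ) - 2 * t i 0 - ‖v 0‖^2 = -(2 * t i 0) := by
          simp [hv0]
        rw [hvz]
        have h1 := habs i 0 h0mem
        have h2 := hCik i 0 h0mem
        have h3 : 0 ≤ 2*M*‖X ω‖ := by positivity
        have h4 := le_abs_self (t i 0)
        have h5 := neg_abs_le (t i 0)
        have h6 : (0:ℝ) ≤ ‖v 0‖^2 := by positivity
        nlinarith
      · -- upper bound
        simp only [hφ]
        refine le_trans (Finset.inf'_le _ (Finset.mem_univ i₀)) ?_
        refine Finset.sup'_le _ _ fun k hk => ?_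
        have h1 : (inner ℝ (v k) (X ω) : ℝ) ≤ ‖v k‖ * ‖X ω‖ := real_inner_le_norm _ _
        have h2 : ‖v k‖ * ‖X ω‖ ≤ M * ‖X ω‖ :=
          mul_le_mul_of_nonneg_right (hMk k hk) (norm_nonneg _)
        have h3 := habs i₀ k hk
        have h4 := hCik i₀ k hk
        have h5 := neg_abs_le (t i₀ k)
        have h6 : (0:ℝ) ≤ ‖v k‖^2 := by positivity
        nlinarith
    · exact (integrable_const C).add (hX1.const_mul (2*M))
    · refine ae_of_all _ fun ω => ?_
      have hco : Continuous fun t : Fin N → ℕ → ℝ => φ n t ω := by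
        simp only [hφ]
        refine Continuous.finset_inf'_apply (f := fun (i : Fin N) (t : Fin N → ℕ → ℝ) =>
          (Finset.range (n+1)).sup' Finset.nonempty_range_add_one fun k =>
            2 * (inner ℝ (v k) (X ω) : ℝ) - 2 * t i k - ‖v k‖^2) hne fun i _ => ?_
        refine Continuous.finset_sup'_apply (f := fun (k : ℕ) (t : Fin N → ℕ → ℝ) =>
          2 * (inner ℝ (v k) (X ω) : ℝ) - 2 * t i k - ‖v k‖^2)
          Finset.nonempty_range_add_one fun k _ => ?_
        have happ : Continuous fun t : Fin N → ℕ → ℝ => t i k :=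
          (continuous_apply k).comp (continuous_apply i)
        exact (continuous_const.sub (continuous_const.mul happ)).sub continuous_const
      exact hco.continuousAt
  have hGcont : ∀ n, Continuous (G n) := fun n => (hFcont n).comp hTcont
  -- conclusion
  show LowerSemicontinuous D
  intro x₀ c hc
  obtain ⟨n, hn⟩ := ((hGD x₀).eventually (eventually_gt_nhds hc)).exists
  filter_upwards [((hGcont n).continuousAt (x := x₀)).eventually
    (eventually_gt_nhds hn)] with x hx
  exact lt_of_lt_of_le hx (hGleD n x)
end

section
/- Let H be a separable Hilbert space and X ∈ L²(Ω;H). For every N ≥ 1, the distortion function D_N attains its minimum on H^N, i.e. there exists an optimal quantizer at level N. -/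
open MeasureTheory Filter Topology ENNReal

section AuxiliaryLemmas

section helpers

lemma ofReal_iInf_fin {ι : Type*} [Finite ι] [Nonempty ι] (g : ι → ℝ) :
    ENNReal.ofReal (⨅ i, g i) = ⨅ i, ENNReal.ofReal (g i) := by
  obtain ⟨i₀, h₀⟩ := Finite.exists_min g
  have h1 : (⨅ i, g i) = g i₀ :=
    le_antisymm (ciInf_le (Finite.bddBelow_range g) i₀) (le_ciInf h₀)
  have h2 : (⨅ i, ENNReal.ofReal (g i)) = ENNReal.ofReal (g i₀) :=
    le_antisymm (iInf_le _ i₀) (le_iInf fun i => ENNReal.ofReal_le_ofReal (h₀ i))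
  rw [h1, h2]

lemma lt_iInf_fin {ι : Type*} [Finite ι] [Nonempty ι] {b : ℝ≥0∞} {g : ι → ℝ≥0∞}
    (h : ∀ i, b < g i) : b < ⨅ i, g i := by
  obtain ⟨i₀, h₀⟩ := Finite.exists_min g
  exact lt_of_lt_of_le (h i₀) (le_iInf h₀)

end helpers

variable {H : Type*} [NormedAddCommGroup H] [InnerProductSpace ℝ H]

local notation "⟪" x ", " y "⟫" => @inner ℝ _ _ x y

lemma weak_bw [TopologicalSpace.SeparableSpace H] [CompleteSpace H]
    (u : ℕ → H) (M : ℝ) (hu : ∀ k, ‖u k‖ ≤ M) :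
    ∃ φ : ℕ → ℕ, StrictMono φ ∧ ∃ z : H,
      ∀ v : H, Tendsto (fun k => ⟪v, u (φ k)⟫) atTop (𝓝 ⟪v, z⟫) := by
  have hM0 : 0 ≤ M := le_trans (norm_nonneg _) (hu 0)
  haveI : Nonempty H := ⟨0⟩
  set d : ℕ → H := TopologicalSpace.denseSeq H with hd
  have hdd : DenseRange d := TopologicalSpace.denseRange_denseSeq H
  -- compactness in the product space
  set K : Set (ℕ → ℝ) := Set.univ.pi fun n => Set.Icc (-(‖d n‖ * M)) (‖d n‖ * M) with hK
  have hKc : IsCompact K := isCompact_univ_pi fun n => isCompact_Icc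
  have hmem : ∀ k, (fun n => ⟪d n, u k⟫) ∈ K := by
    intro k
    refine Set.mem_univ_pi.mpr fun n => ?_
    have := abs_real_inner_le_norm (d n) (u k)
    have h2 : ‖d n‖ * ‖u k‖ ≤ ‖d n‖ * M := mul_le_mul_of_nonneg_left (hu k) (norm_nonneg _)
    rw [Set.mem_Icc, ← abs_le]
    exact this.trans h2
  obtain ⟨g, -, φ, hφ, hconv⟩ := hKc.tendsto_subseq hmem
  have hcoord : ∀ n, Tendsto (fun k => ⟪d n, u (φ k)⟫) atTop (𝓝 (g n)) := by
    intro n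
    exact (tendsto_pi_nhds.mp hconv) n
  -- Cauchy for every v
  have hC : ∀ v : H, CauchySeq (fun k => ⟪v, u (φ k)⟫) := by
    intro v
    rw [Metric.cauchySeq_iff]
    intro ε hε
    have hM' : (0:ℝ) < M + 1 := by linarith
    obtain ⟨n, hn⟩ := hdd.exists_dist_lt v (show (0:ℝ) < ε / (3 * (M + 1)) by positivity)
    obtain ⟨B, hB⟩ := (Metric.cauchySeq_iff.mp (hcoord n).cauchySeq) (ε / 3) (by positivity)
    refine ⟨B, fun j hj k hk => ?_⟩
    have hdn : ‖v - d n‖ < ε / (3 * (M + 1)) := by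
      rw [← dist_eq_norm]; exact hn
    have key : ∀ m : ℕ, |⟪v, u (φ m)⟫ - ⟪d n, u (φ m)⟫| ≤ ε / (3 * (M + 1)) * M := by
      intro m
      have : ⟪v, u (φ m)⟫ - ⟪d n, u (φ m)⟫ = ⟪v - d n, u (φ m)⟫ := (inner_sub_left _ _ _).symm
      rw [this]
      refine (abs_real_inner_le_norm _ _).trans ?_
      exact mul_le_mul hdn.le (hu _) (norm_nonneg _) (by positivity)
    have h1 := key j
    have h2 := key k
    have h3 := hB j hj k hk
    rw [Real.dist_eq] at h3 ⊢
    have hfrac : ε / (3 * (M + 1)) * M ≤ ε / 3 := by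
      rw [div_mul_eq_mul_div, div_le_div_iff₀ (by positivity) (by norm_num)]
      nlinarith
    have t1 : |⟪v, u (φ j)⟫ - ⟪v, u (φ k)⟫| ≤
        |⟪v, u (φ j)⟫ - ⟪d n, u (φ j)⟫| + |⟪d n, u (φ j)⟫ - ⟪v, u (φ k)⟫| :=
      abs_sub_le _ _ _
    have t2 : |⟪d n, u (φ j)⟫ - ⟪v, u (φ k)⟫| ≤
        |⟪d n, u (φ j)⟫ - ⟪d n, u (φ k)⟫| + |⟪d n, u (φ k)⟫ - ⟪v, u (φ k)⟫| :=
      abs_sub_le _ _ _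
    have t3 : |⟪d n, u (φ k)⟫ - ⟪v, u (φ k)⟫| = |⟪v, u (φ k)⟫ - ⟪d n, u (φ k)⟫| :=
      abs_sub_comm _ _
    linarith
  -- limits exist
  have hL : ∀ v : H, ∃ L : ℝ, Tendsto (fun k => ⟪v, u (φ k)⟫) atTop (𝓝 L) :=
    fun v => cauchySeq_tendsto_of_complete (hC v)
  choose L hLt using hL
  -- linearity and boundedness
  have hadd : ∀ v w : H, L (v + w) = L v + L w := by
    intro v w
    refine tendsto_nhds_unique (hLt (v + w)) ?_
    have : (fun k => ⟪v + w, u (φ k)⟫) = fun k => ⟪v, u (φ k)⟫ + ⟪w, u (φ k)⟫ := by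
      funext k; exact inner_add_left _ _ _
    rw [this]
    exact (hLt v).add (hLt w)
  have hsmul : ∀ (c : ℝ) (v : H), L (c • v) = c * L v := by
    intro c v
    refine tendsto_nhds_unique (hLt (c • v)) ?_
    have : (fun k => ⟪c • v, u (φ k)⟫) = fun k => c * ⟪v, u (φ k)⟫ := by
      funext k; exact real_inner_smul_left _ _ _
    rw [this]
    exact (hLt v).const_mul c
  have hbdd : ∀ v : H, ‖L v‖ ≤ M * ‖v‖ := by
    intro v
    have : ∀ k, |⟪v, u (φ k)⟫| ≤ M * ‖v‖ := by
      intro k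
      refine (abs_real_inner_le_norm _ _).trans ?_
      rw [mul_comm]
      exact mul_le_mul_of_nonneg_right (hu _) (norm_nonneg _)
    rw [Real.norm_eq_abs]
    exact le_of_tendsto (hLt v).abs (Eventually.of_forall this)
  let ℓ : H →ₗ[ℝ] ℝ :=
    { toFun := L, map_add' := hadd, map_smul' := hsmul }
  let f : H →L[ℝ] ℝ := LinearMap.mkContinuous ℓ M hbdd
  refine ⟨φ, hφ, (InnerProductSpace.toDual ℝ H).symm f, fun v => ?_⟩
  have : ⟪v, (InnerProductSpace.toDual ℝ H).symm f⟫ = L v := by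
    rw [real_inner_comm]
    exact InnerProductSpace.toDual_symm_apply
  rw [this]
  exact hLt v




lemma step_dichotomy [TopologicalSpace.SeparableSpace H] [CompleteSpace H] (u : ℕ → H) :
    ∃ ψ : ℕ → ℕ, StrictMono ψ ∧
      ((∃ z : H, ∀ v : H, Tendsto (fun k => ⟪v, u (ψ k)⟫) atTop (𝓝 ⟪v, z⟫))
        ∨ Tendsto (fun k => ‖u (ψ k)‖) atTop atTop) := by
  by_cases h : Tendsto (fun k => ‖u k‖) atTop atTop
  · exact ⟨id, strictMono_id, Or.inr h⟩
  · rw [tendsto_atTop] at h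
    push_neg at h
    obtain ⟨M, hM⟩ := h
    obtain ⟨ψ₁, hψ₁, h1⟩ := extraction_of_frequently_atTop hM
    obtain ⟨ψ₂, hψ₂, z, hz⟩ := weak_bw (fun k => u (ψ₁ k)) M
      (fun k => (h1 k).le)
    exact ⟨ψ₁ ∘ ψ₂, hψ₁.comp hψ₂, Or.inl ⟨z, hz⟩⟩

lemma extract_multi [TopologicalSpace.SeparableSpace H] [CompleteSpace H]
    {N : ℕ} (u : ℕ → Fin N → H) (n : ℕ) :
    ∃ φ : ℕ → ℕ, StrictMono φ ∧ ∀ i : Fin N, (i : ℕ) < n →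
      ((∃ z : H, ∀ v : H, Tendsto (fun k => ⟪v, u (φ k) i⟫) atTop (𝓝 ⟪v, z⟫))
        ∨ Tendsto (fun k => ‖u (φ k) i‖) atTop atTop) := by
  induction n with
  | zero => exact ⟨id, strictMono_id, fun i h => absurd h (Nat.not_lt_zero _)⟩
  | succ n ih =>
    obtain ⟨φ, hφ, hP⟩ := ih
    by_cases hn : n < N
    · obtain ⟨ψ, hψ, hQ⟩ := step_dichotomy (fun k => u (φ k) ⟨n, hn⟩)
      refine ⟨φ ∘ ψ, hφ.comp hψ, fun i hi => ?_⟩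
      rcases Nat.lt_succ_iff_lt_or_eq.mp hi with h | h
      · rcases hP i h with ⟨z, hz⟩ | h'
        · exact Or.inl ⟨z, fun v => (hz v).comp hψ.tendsto_atTop⟩
        · exact Or.inr (h'.comp hψ.tendsto_atTop)
      · have hieq : i = ⟨n, hn⟩ := Fin.ext h
        subst hieq
        exact hQ
    · refine ⟨φ, hφ, fun i hi => hP i ?_⟩
      have := i.isLt
      omega

lemma eventually_lt_of_weak (u : ℕ → H) (z v : H)
    (hz : ∀ w : H, Tendsto (fun k => ⟪w, u k⟫) atTop (𝓝 ⟪w, z⟫))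
    {c : ℝ≥0∞} (hc : c < ENNReal.ofReal (‖v - z‖ ^ 2)) :
    ∀ᶠ k in atTop, c < ENNReal.ofReal (‖v - u k‖ ^ 2) := by
  have hcne : c ≠ ∞ := hc.ne_top
  set t : ℝ := ‖v - z‖ with ht
  have hct : c.toReal < t ^ 2 := (ENNReal.lt_ofReal_iff_toReal_lt hcne).mp hc
  have hc0 : 0 ≤ c.toReal := ENNReal.toReal_nonneg
  have ht0 : 0 < t := by
    by_contra h
    push_neg at h
    have : t = 0 := le_antisymm h (norm_nonneg _)
    rw [this] at hct
    nlinarith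
  set s : ℝ := (c.toReal + t ^ 2) / 2 with hs
  have hs0 : 0 < s := by positivity
  have hslt : s < t ^ 2 := by rw [hs]; linarith
  have hcs : c.toReal < s := by rw [hs]; linarith
  set r : ℝ := Real.sqrt s with hr
  have hr0 : 0 < r := Real.sqrt_pos.mpr hs0
  have hr2 : r ^ 2 = s := Real.sq_sqrt hs0.le
  have hrt : r < t := by
    nlinarith
  -- inner products converge
  have hconv : Tendsto (fun k => ⟪v - z, v - u k⟫) atTop (𝓝 (t ^ 2)) := by
    have h1 : Tendsto (fun k => ⟪v - z, u k⟫) atTop (𝓝 ⟪v - z, z⟫) := hz (v - z)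
    have h2 : Tendsto (fun k => ⟪v - z, v⟫ - ⟪v - z, u k⟫) atTop
        (𝓝 (⟪v - z, v⟫ - ⟪v - z, z⟫)) := tendsto_const_nhds.sub h1
    have h3 : ∀ k, ⟪v - z, v⟫ - ⟪v - z, u k⟫ = ⟪v - z, v - u k⟫ := by
      intro k; rw [inner_sub_right]
    have h4 : ⟪v - z, v⟫ - ⟪v - z, z⟫ = t ^ 2 := by
      rw [← inner_sub_right, real_inner_self_eq_norm_sq]
    rw [funext h3, h4] at h2
    exact h2
  have hev : ∀ᶠ k in atTop, r * t < ⟪v - z, v - u k⟫ :=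
    hconv.eventually_const_lt (by nlinarith)
  filter_upwards [hev] with k hk
  have hnorm : r < ‖v - u k‖ := by
    have h5 : ⟪v - z, v - u k⟫ ≤ t * ‖v - u k‖ := real_inner_le_norm _ _
    nlinarith
  have h6 : ENNReal.ofReal s ≤ ENNReal.ofReal (‖v - u k‖ ^ 2) := by
    apply ENNReal.ofReal_le_ofReal
    nlinarith
  refine lt_of_lt_of_le ?_ h6
  calc c = ENNReal.ofReal c.toReal := (ENNReal.ofReal_toReal hcne).symm
    _ < ENNReal.ofReal s := (ENNReal.ofReal_lt_ofReal_iff hs0).mpr hcs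

lemma eventually_lt_of_escape (u : ℕ → H) (v : H)
    (hu : Tendsto (fun k => ‖u k‖) atTop atTop)
    {c : ℝ≥0∞} (hc : c ≠ ∞) :
    ∀ᶠ k in atTop, c < ENNReal.ofReal (‖v - u k‖ ^ 2) := by
  set R : ℝ := c.toReal with hR
  have hR0 : 0 ≤ R := ENNReal.toReal_nonneg
  have hev : ∀ᶠ k in atTop, ‖v‖ + (R + 1) ≤ ‖u k‖ := hu.eventually_ge_atTop _
  filter_upwards [hev] with k hk
  have h1 : R + 1 ≤ ‖v - u k‖ := by
    have h2 : ‖u k‖ - ‖v‖ ≤ ‖u k - v‖ := norm_sub_norm_le _ _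
    rw [norm_sub_rev]
    linarith
  have h3 : ENNReal.ofReal ((R + 1) ^ 2) ≤ ENNReal.ofReal (‖v - u k‖ ^ 2) := by
    apply ENNReal.ofReal_le_ofReal
    nlinarith
  refine lt_of_lt_of_le ?_ h3
  calc c = ENNReal.ofReal R := (ENNReal.ofReal_toReal hc).symm
    _ < ENNReal.ofReal ((R + 1) ^ 2) := by
        rw [ENNReal.ofReal_lt_ofReal_iff (by positivity)]
        nlinarith

end AuxiliaryLemmas

/-- existence of an optimal quantizer at each level `N ≥ 1`:
the distortion attains its infimum on `H^N`. -/
theorem exists_optimal_quantizer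
    {H Ω : Type*} [NormedAddCommGroup H] [InnerProductSpace ℝ H]
    [TopologicalSpace.SeparableSpace H] [CompleteSpace H]
    [MeasurableSpace H] [BorelSpace H]
    {mΩ : MeasurableSpace Ω} (μ : Measure Ω) [IsProbabilityMeasure μ]
    (X : Ω → H) (hXm : Measurable X)
    (hX2 : Integrable (fun ω => ‖X ω‖ ^ 2) μ)
    (N : ℕ) (hN : 1 ≤ N) :
    ∃ x : Fin N → H, ∀ y : Fin N → H,
      (∫ ω, ⨅ i : Fin N, ‖X ω - x i‖ ^ 2 ∂μ) ≤
        ∫ ω, ⨅ i : Fin N, ‖X ω - y i‖ ^ 2 ∂μ := by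
  classical
  have i₀ : Fin N := ⟨0, hN⟩
  haveI hne : Nonempty (Fin N) := ⟨i₀⟩
  -- measurability (ℝ≥0∞ level)
  have hmeasF : ∀ y : Fin N → H,
      Measurable (fun ω => ⨅ i : Fin N, ENNReal.ofReal (‖X ω - y i‖ ^ 2)) := by
    intro y
    refine Measurable.iInf fun i => ?_
    have h1 : Measurable fun ω => X ω - y i :=
      (continuous_id.sub continuous_const).measurable.comp hXm
    exact (h1.norm.pow_const 2).ennreal_ofReal
  have h0 : ∀ (y : Fin N → H) (ω : Ω), 0 ≤ ⨅ i : Fin N, ‖X ω - y i‖ ^ 2 :=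
    fun y ω => Real.iInf_nonneg fun i => sq_nonneg _
  have hofReal : ∀ (y : Fin N → H) (ω : Ω),
      ENNReal.ofReal (⨅ i : Fin N, ‖X ω - y i‖ ^ 2)
        = ⨅ i : Fin N, ENNReal.ofReal (‖X ω - y i‖ ^ 2) :=
    fun y ω => ofReal_iInf_fin _
  have hmr : ∀ y : Fin N → H, Measurable (fun ω => ⨅ i : Fin N, ‖X ω - y i‖ ^ 2) := by
    intro y
    have heq : (fun ω => ⨅ i : Fin N, ‖X ω - y i‖ ^ 2)
        = fun ω => (⨅ i : Fin N, ENNReal.ofReal (‖X ω - y i‖ ^ 2)).toReal := by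
      funext ω
      rw [← hofReal y ω, ENNReal.toReal_ofReal (h0 y ω)]
    rw [heq]
    exact (hmeasF y).ennreal_toReal
  have hreal : ∀ y : Fin N → H,
      (∫ ω, ⨅ i : Fin N, ‖X ω - y i‖ ^ 2 ∂μ)
        = (∫⁻ ω, ⨅ i : Fin N, ENNReal.ofReal (‖X ω - y i‖ ^ 2) ∂μ).toReal := by
    intro y
    rw [integral_eq_lintegral_of_nonneg_ae (Eventually.of_forall (h0 y))
      (hmr y).aestronglyMeasurable]
    congr 1
    exact lintegral_congr (hofReal y)
  -- integrability / finiteness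
  have hInt : ∀ c : H, Integrable (fun ω => ‖X ω - c‖ ^ 2) μ := by
    intro c
    have hm : AEStronglyMeasurable (fun ω => ‖X ω - c‖ ^ 2) μ :=
      ((((continuous_id.sub continuous_const).measurable.comp hXm).norm).pow_const
        2).aestronglyMeasurable
    refine ((hX2.const_mul 2).add (integrable_const (2 * ‖c‖ ^ 2))).mono' hm
      (Eventually.of_forall fun ω => ?_)
    have h1 : ‖X ω - c‖ ≤ ‖X ω‖ + ‖c‖ := norm_sub_le _ _
    rw [Real.norm_eq_abs, abs_of_nonneg (sq_nonneg _)]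
    simp only [Pi.add_apply]
    have h2 : ‖X ω - c‖ ^ 2 ≤ (‖X ω‖ + ‖c‖) ^ 2 := pow_le_pow_left₀ (norm_nonneg _) h1 2
    nlinarith [sq_nonneg (‖X ω‖ - ‖c‖)]
  have hfin : ∀ y : Fin N → H,
      (∫⁻ ω, ⨅ i : Fin N, ENNReal.ofReal (‖X ω - y i‖ ^ 2) ∂μ) ≠ ∞ := by
    intro y
    exact ne_top_of_le_ne_top (hInt (y i₀)).lintegral_lt_top.ne
      (lintegral_mono fun ω => iInf_le _ i₀)
  -- the infimum
  set m : ℝ≥0∞ := ⨅ y : Fin N → H, ∫⁻ ω, ⨅ i : Fin N, ENNReal.ofReal (‖X ω - y i‖ ^ 2) ∂μ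
    with hm
  have hmfin : m ≠ ∞ := ne_top_of_le_ne_top (hfin (fun _ => 0)) (iInf_le _ _)
  -- minimizing sequence
  have hminseq : ∀ k : ℕ, ∃ y : Fin N → H,
      (∫⁻ ω, ⨅ i : Fin N, ENNReal.ofReal (‖X ω - y i‖ ^ 2) ∂μ) < m + ((k : ℝ≥0∞) + 1)⁻¹ := by
    intro k
    have hinv : ((k : ℝ≥0∞) + 1)⁻¹ ≠ 0 :=
      ENNReal.inv_ne_zero.mpr (ENNReal.add_ne_top.mpr ⟨ENNReal.natCast_ne_top k, ENNReal.one_ne_top⟩)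
    have hlt : (⨅ y : Fin N → H, ∫⁻ ω, ⨅ i : Fin N, ENNReal.ofReal (‖X ω - y i‖ ^ 2) ∂μ)
        < m + ((k : ℝ≥0∞) + 1)⁻¹ := by
      rw [← hm]
      exact ENNReal.lt_add_right hmfin hinv
    exact iInf_lt_iff.mp hlt
  choose y hy using hminseq
  -- subsequence extraction
  obtain ⟨φ, hφ, hQ⟩ := extract_multi y N
  have hgood : ∀ i : Fin N,
      ((∃ z : H, ∀ v : H, Tendsto (fun k => (inner ℝ v (y (φ k) i) : ℝ)) atTop
          (𝓝 (inner ℝ v z)))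
        ∨ Tendsto (fun k => ‖y (φ k) i‖) atTop atTop) := fun i => hQ i i.isLt
  -- liminf of the values along the subsequence is ≤ m
  have hJliminf : Filter.liminf
      (fun k => ∫⁻ ω, ⨅ i : Fin N, ENNReal.ofReal (‖X ω - y (φ k) i‖ ^ 2) ∂μ) atTop ≤ m := by
    refine ENNReal.le_of_forall_pos_le_add fun ε hε _ => ?_
    obtain ⟨n, hn⟩ := ENNReal.exists_inv_nat_lt
      (show ((ε : ℝ≥0∞)) ≠ 0 by exact_mod_cast hε.ne')
    refine liminf_le_of_frequently_le' (Filter.Eventually.frequently ?_)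
    filter_upwards [Filter.eventually_ge_atTop n] with k hk
    have h1 : ((φ k : ℝ≥0∞) + 1)⁻¹ ≤ ((n : ℝ≥0∞))⁻¹ := by
      apply ENNReal.inv_le_inv'
      have : (n : ℝ≥0∞) ≤ (φ k : ℝ≥0∞) := by
        exact_mod_cast le_trans hk (hφ.le_apply)
      exact le_trans this le_self_add
    exact le_trans (hy (φ k)).le (add_le_add le_rfl (le_trans h1 hn.le))
  -- there is at least one weakly convergent coordinate
  have hex : ∃ z₀ : H, ∃ j : Fin N, ∀ v : H,
      Tendsto (fun k => (inner ℝ v (y (φ k) j) : ℝ)) atTop (𝓝 (inner ℝ v z₀)) := by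
    by_contra hno
    push_neg at hno
    have hesc : ∀ i : Fin N, Tendsto (fun k => ‖y (φ k) i‖) atTop atTop := by
      intro i
      rcases hgood i with ⟨z, hz⟩ | h
      · obtain ⟨v, hv⟩ := hno z i
        exact absurd (hz v) hv
      · exact h
    have hpt : ∀ ω : Ω, (⊤ : ℝ≥0∞) ≤ Filter.liminf
        (fun k => ⨅ i : Fin N, ENNReal.ofReal (‖X ω - y (φ k) i‖ ^ 2)) atTop := by
      intro ω
      rw [le_liminf_iff]
      intro b hb
      have hev : ∀ i : Fin N, ∀ᶠ k in atTop,
          b < ENNReal.ofReal (‖X ω - y (φ k) i‖ ^ 2) :=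
        fun i => eventually_lt_of_escape _ (X ω) (hesc i) hb.ne_top
      filter_upwards [Filter.eventually_all.mpr hev] with k hk
      exact lt_iInf_fin hk
    have hFatou : (∫⁻ ω, Filter.liminf
          (fun k => ⨅ i : Fin N, ENNReal.ofReal (‖X ω - y (φ k) i‖ ^ 2)) atTop ∂μ)
        ≤ Filter.liminf
          (fun k => ∫⁻ ω, ⨅ i : Fin N, ENNReal.ofReal (‖X ω - y (φ k) i‖ ^ 2) ∂μ) atTop :=
      lintegral_liminf_le fun k => hmeasF (y (φ k))
    have htop : (∫⁻ ω, Filter.liminf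
        (fun k => ⨅ i : Fin N, ENNReal.ofReal (‖X ω - y (φ k) i‖ ^ 2)) atTop ∂μ) = ⊤ := by
      have : (∫⁻ (_ : Ω), (⊤ : ℝ≥0∞) ∂μ) ≤ _ := lintegral_mono fun ω => hpt ω
      refine top_le_iff.mp (le_trans (le_of_eq ?_) this)
      simp [lintegral_const]
    rw [htop] at hFatou
    exact hmfin (top_le_iff.mp (le_trans hFatou hJliminf))
  obtain ⟨z₀, -, -⟩ := hex
  -- choose the candidate points
  have hchoice : ∀ i : Fin N, ∃ w : H,
      ((∀ v : H, Tendsto (fun k => (inner ℝ v (y (φ k) i) : ℝ)) atTop (𝓝 (inner ℝ v w)))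
        ∨ Tendsto (fun k => ‖y (φ k) i‖) atTop atTop) := by
    intro i
    rcases hgood i with ⟨z, hz⟩ | h
    exacts [⟨z, Or.inl hz⟩, ⟨z₀, Or.inr h⟩]
  choose x hx using hchoice
  -- key pointwise liminf bound
  have hkey : ∀ ω : Ω, (⨅ i : Fin N, ENNReal.ofReal (‖X ω - x i‖ ^ 2))
      ≤ Filter.liminf
        (fun k => ⨅ i : Fin N, ENNReal.ofReal (‖X ω - y (φ k) i‖ ^ 2)) atTop := by
    intro ω
    rw [le_liminf_iff]
    intro b hb
    have hbne : b ≠ ∞ := (lt_of_lt_of_le hb (iInf_le _ i₀)).ne_top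
    have hble : ∀ i, b < ENNReal.ofReal (‖X ω - x i‖ ^ 2) :=
      fun i => lt_of_lt_of_le hb (iInf_le _ i)
    have hev : ∀ i : Fin N, ∀ᶠ k in atTop,
        b < ENNReal.ofReal (‖X ω - y (φ k) i‖ ^ 2) := by
      intro i
      rcases hx i with hweak | hescape
      · exact eventually_lt_of_weak _ (x i) (X ω) hweak (hble i)
      · exact eventually_lt_of_escape _ (X ω) hescape hbne
    filter_upwards [Filter.eventually_all.mpr hev] with k hk
    exact lt_iInf_fin hk
  have hJx : (∫⁻ ω, ⨅ i : Fin N, ENNReal.ofReal (‖X ω - x i‖ ^ 2) ∂μ) ≤ m :=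
    le_trans (lintegral_mono hkey)
      (le_trans (lintegral_liminf_le fun k => hmeasF (y (φ k))) hJliminf)
  refine ⟨x, fun yy => ?_⟩
  rw [hreal x, hreal yy]
  exact ENNReal.toReal_mono (hfin yy) (le_trans hJx (hm ▸ iInf_le _ yy))
end

section
/- Let H be a separable Hilbert space and X ∈ L²(Ω;H). If the support of the law of X has cardinality at least N+1, then the optimal quantization error at level N+1 is strictly smaller than at level N: e_{N+1}(X,H) < e_N(X,H). -/
open MeasureTheory Metric

section QuantAux

variable {H Ω : Type*} [NormedAddCommGroup H] [InnerProductSpace ℝ H]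
    [MeasurableSpace H] [BorelSpace H]
    {mΩ : MeasurableSpace Ω} {μ : Measure Ω} [IsProbabilityMeasure μ]
    {X : Ω → H}

omit [InnerProductSpace ℝ H] in
lemma quant_integrable_infDist_sq (hXm : Measurable X)
    (hX2 : Integrable (fun ω => ‖X ω‖ ^ 2) μ) (Γ : Finset H) (hΓ : Γ.Nonempty) :
    Integrable (fun ω => infDist (X ω) (Γ : Set H) ^ 2) μ := by
  obtain ⟨γ, hγ⟩ := hΓ
  have hmeas : Measurable fun ω => infDist (X ω) (Γ : Set H) ^ 2 :=
    ((continuous_infDist_pt (Γ : Set H)).measurable.comp hXm).pow_const 2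
  refine Integrable.mono' ((hX2.const_mul 2).add (integrable_const (2 * ‖γ‖ ^ 2)))
    hmeas.aestronglyMeasurable ?_
  filter_upwards with ω
  have h0 : (0:ℝ) ≤ infDist (X ω) (Γ : Set H) := infDist_nonneg
  have h1 : infDist (X ω) (Γ : Set H) ≤ dist (X ω) γ :=
    infDist_le_dist_of_mem (by exact_mod_cast hγ)
  have h2 : dist (X ω) γ ≤ ‖X ω‖ + ‖γ‖ := by
    simpa [dist_eq_norm] using norm_sub_le (X ω) γ
  simp only [Pi.add_apply]
  rw [Real.norm_eq_abs, abs_of_nonneg (by positivity)]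
  nlinarith [pow_le_pow_left₀ h0 (h1.trans h2) 2, sq_nonneg (‖X ω‖ - ‖γ‖),
    norm_nonneg (X ω), norm_nonneg γ]

end QuantAux

/-- if the support of the law of `X` contains at least `N+1` points,
then `e_{N+1}(X,H) < e_N(X,H)`, where
`e_N(X,H) = inf { (E d(X,Γ)²)^{1/2} : Γ ⊂ H nonempty, card Γ ≤ N }`. -/
theorem quantization_error_strict_decrease
    {H Ω : Type*} [NormedAddCommGroup H] [InnerProductSpace ℝ H]
    [TopologicalSpace.SeparableSpace H] [CompleteSpace H]
    [MeasurableSpace H] [BorelSpace H]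
    {mΩ : MeasurableSpace Ω} (μ : Measure Ω) [IsProbabilityMeasure μ]
    (X : Ω → H) (hXm : Measurable X)
    (hX2 : Integrable (fun ω => ‖X ω‖ ^ 2) μ)
    (N : ℕ) (hN : 1 ≤ N)
    -- the support of the distribution of `X` has at least `N+1` points
    (hsupp : ∃ S : Finset H, S.card = N + 1 ∧
      ∀ x ∈ S, ∀ ε : ℝ, 0 < ε → 0 < μ (X ⁻¹' Metric.ball x ε)) :
    sInf {r : ℝ | ∃ Γ : Finset H, Γ.Nonempty ∧ Γ.card ≤ N + 1 ∧
        r = Real.sqrt (∫ ω, Metric.infDist (X ω) (Γ : Set H) ^ 2 ∂μ)} <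
      sInf {r : ℝ | ∃ Γ : Finset H, Γ.Nonempty ∧ Γ.card ≤ N ∧
        r = Real.sqrt (∫ ω, Metric.infDist (X ω) (Γ : Set H) ^ 2 ∂μ)} := by
  classical
  obtain ⟨S, hScard, hSpos⟩ := hsupp
  have hSne : S.Nonempty := Finset.card_pos.mp (by omega)
  obtain ⟨s₀, hs₀⟩ := hSne
  -- minimal pairwise distance in S
  set T : Finset (H × H) := (S ×ˢ S).filter (fun p => p.1 ≠ p.2) with hT
  have hTne : T.Nonempty := by
    have h2 : 1 < S.card := by omega
    obtain ⟨x, hx, y, hy, hxy⟩ := Finset.one_lt_card.mp h2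
    exact ⟨(x, y), Finset.mem_filter.mpr ⟨Finset.mem_product.mpr ⟨hx, hy⟩, hxy⟩⟩
  set d : ℝ := T.inf' hTne (fun p => dist p.1 p.2) with hd
  have hdpos : 0 < d := by
    rw [hd, Finset.lt_inf'_iff]
    rintro ⟨x, y⟩ hp
    simp only [hT, Finset.mem_filter, Finset.mem_product] at hp
    exact dist_pos.mpr hp.2
  have hdle : ∀ x ∈ S, ∀ y ∈ S, x ≠ y → d ≤ dist x y := by
    intro x hx y hy hxy
    have hmem : (x, y) ∈ T :=
      Finset.mem_filter.mpr ⟨Finset.mem_product.mpr ⟨hx, hy⟩, hxy⟩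
    rw [hd]
    exact Finset.inf'_le _ hmem
  -- uniform lower bound on masses of small balls around points of S
  set m : ℝ := S.inf' (Finset.nonempty_of_ne_empty (Finset.ne_empty_of_mem hs₀)) (fun s => (μ (X ⁻¹' ball s (d/8))).toReal) with hm
  have hmpos : 0 < m := by
    rw [hm, Finset.lt_inf'_iff]
    intro s hs
    exact ENNReal.toReal_pos (hSpos s hs (d/8) (by positivity)).ne' (measure_ne_top μ _)
  set δ : ℝ := d^2/8 * m with hδ
  have hδpos : 0 < δ := by positivity
  -- key improvement step
  have key : ∀ Γ : Finset H, Γ.Nonempty → Γ.card ≤ N →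
      ∃ Γ' : Finset H, Γ'.Nonempty ∧ Γ'.card ≤ N + 1 ∧
        (∫ ω, infDist (X ω) ((Γ' : Finset H) : Set H) ^ 2 ∂μ) ≤
          (∫ ω, infDist (X ω) (Γ : Set H) ^ 2 ∂μ) - δ := by
    intro Γ hΓ hΓcard
    have hΓset : (Γ : Set H).Nonempty := by exact_mod_cast hΓ
    -- pigeonhole: some point of S is d/2-far from Γ
    have hfar : ∃ s ∈ S, d/2 ≤ infDist s (Γ : Set H) := by
      by_contra hcon
      push_neg at hcon
      have hf : ∀ s : H, ∃ γ, γ ∈ Γ ∧ (s ∈ S → dist s γ < d/2) := by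
        intro s
        by_cases hs : s ∈ S
        · obtain ⟨γ, hγΓ, hγd⟩ := (infDist_lt_iff hΓset).mp (hcon s hs)
          exact ⟨γ, by exact_mod_cast hγΓ, fun _ => hγd⟩
        · exact ⟨hΓ.choose, hΓ.choose_spec, fun h => absurd h hs⟩
      choose f hfΓ hfd using hf
      obtain ⟨x, hx, y, hy, hxy, hfe⟩ :=
        Finset.exists_ne_map_eq_of_card_lt_of_maps_to
          (show Γ.card < S.card by omega) (fun a _ => hfΓ a)
      have h1 : dist x (f x) < d/2 := hfd x hx
      have h2 : dist y (f y) < d/2 := hfd y hy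
      have h3 : d ≤ dist x y := hdle x hx y hy hxy
      have h4 : dist x y ≤ dist x (f x) + dist (f x) y := dist_triangle _ _ _
      rw [dist_comm (f x) y] at h4
      rw [← hfe] at h2
      linarith
    obtain ⟨s, hsS, hsfar⟩ := hfar
    refine ⟨insert s Γ, Finset.insert_nonempty _ _,
      le_trans (Finset.card_insert_le _ _) (by omega), ?_⟩
    set A : Set Ω := X ⁻¹' ball s (d/8) with hA
    have hAmeas : MeasurableSet A := hXm measurableSet_ball
    -- pointwise inequality
    have hpt : ∀ ω, infDist (X ω) ((insert s Γ : Finset H) : Set H) ^ 2 ≤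
        infDist (X ω) (Γ : Set H) ^ 2 - A.indicator (fun _ => d^2/8) ω := by
      intro ω
      have hsub : (Γ : Set H) ⊆ ((insert s Γ : Finset H) : Set H) := by
        intro z hz; simp only [Finset.coe_insert, Set.mem_insert_iff]
        right; exact hz
      by_cases hω : ω ∈ A
      · rw [Set.indicator_of_mem hω]
        have h1 : dist (X ω) s < d/8 := by
          simpa [hA, mem_ball] using hω
        have h2 : infDist (X ω) ((insert s Γ : Finset H) : Set H) ≤ dist (X ω) s :=
          infDist_le_dist_of_mem (by simp)
        have h3 : infDist s (Γ : Set H) ≤ infDist (X ω) (Γ : Set H) + dist s (X ω) :=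
          infDist_le_infDist_add_dist
        rw [dist_comm s (X ω)] at h3
        have h4 : (0:ℝ) ≤ infDist (X ω) ((insert s Γ : Finset H) : Set H) := infDist_nonneg
        nlinarith [infDist_nonneg (s := (Γ : Set H)) (x := X ω)]
      · rw [Set.indicator_of_notMem hω, sub_zero]
        have h5 : infDist (X ω) ((insert s Γ : Finset H) : Set H) ≤
            infDist (X ω) (Γ : Set H) := infDist_le_infDist_of_subset hsub hΓset
        exact pow_le_pow_left₀ infDist_nonneg h5 2
    have hint1 : Integrable (fun ω => infDist (X ω) ((insert s Γ : Finset H) : Set H) ^ 2) μ :=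
      quant_integrable_infDist_sq hXm hX2 _ (Finset.insert_nonempty _ _)
    have hint0 : Integrable (fun ω => infDist (X ω) (Γ : Set H) ^ 2) μ :=
      quant_integrable_infDist_sq hXm hX2 _ hΓ
    have hintInd : Integrable (fun ω => A.indicator (fun _ => d^2/8) ω) μ :=
      (integrable_const (d^2/8)).indicator hAmeas
    have hmono := integral_mono hint1 (hint0.sub hintInd) hpt
    simp only [Pi.sub_apply] at hmono
    rw [integral_sub hint0 hintInd, integral_indicator_const _ hAmeas, smul_eq_mul] at hmono
    have hmA : m ≤ (μ A).toReal := by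
      rw [hm]
      exact Finset.inf'_le _ hsS
    have hd8 : (0:ℝ) ≤ d^2/8 := by positivity
    calc (∫ ω, infDist (X ω) ((insert s Γ : Finset H) : Set H) ^ 2 ∂μ)
        ≤ (∫ ω, infDist (X ω) (Γ : Set H) ^ 2 ∂μ) - (μ A).toReal * (d^2/8) := hmono
      _ ≤ (∫ ω, infDist (X ω) (Γ : Set H) ^ 2 ∂μ) - δ := by
          rw [hδ]; nlinarith
  -- now the sInf manipulation
  set E1 : Set ℝ := {r : ℝ | ∃ Γ : Finset H, Γ.Nonempty ∧ Γ.card ≤ N + 1 ∧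
      r = Real.sqrt (∫ ω, infDist (X ω) (Γ : Set H) ^ 2 ∂μ)} with hE1
  set E0 : Set ℝ := {r : ℝ | ∃ Γ : Finset H, Γ.Nonempty ∧ Γ.card ≤ N ∧
      r = Real.sqrt (∫ ω, infDist (X ω) (Γ : Set H) ^ 2 ∂μ)} with hE0
  have hbdd1 : BddBelow E1 := ⟨0, by rintro r ⟨Γ, -, -, rfl⟩; exact Real.sqrt_nonneg _⟩
  have hne1 : E1.Nonempty :=
    ⟨_, ⟨{s₀}, Finset.singleton_nonempty _, by simp, rfl⟩⟩
  have hne0 : E0.Nonempty :=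
    ⟨_, ⟨{s₀}, Finset.singleton_nonempty _, by simpa using hN, rfl⟩⟩
  have ha0 : 0 ≤ sInf E1 := le_csInf hne1 (by rintro r ⟨Γ, -, -, rfl⟩; exact Real.sqrt_nonneg _)
  have hlow : ∀ r ∈ E0, Real.sqrt ((sInf E1)^2 + δ) ≤ r := by
    rintro r ⟨Γ, hΓne, hΓc, rfl⟩
    obtain ⟨Γ', hne', hc', hle⟩ := key Γ hΓne hΓc
    have hmem : Real.sqrt (∫ ω, infDist (X ω) ((Γ' : Finset H) : Set H) ^ 2 ∂μ) ∈ E1 :=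
      ⟨Γ', hne', hc', rfl⟩
    have h1 : sInf E1 ≤ Real.sqrt (∫ ω, infDist (X ω) ((Γ' : Finset H) : Set H) ^ 2 ∂μ) :=
      csInf_le hbdd1 hmem
    have hI' : 0 ≤ ∫ ω, infDist (X ω) ((Γ' : Finset H) : Set H) ^ 2 ∂μ :=
      integral_nonneg fun ω => sq_nonneg _
    have hI : 0 ≤ ∫ ω, infDist (X ω) (Γ : Set H) ^ 2 ∂μ :=
      integral_nonneg fun ω => sq_nonneg _
    have h2 : (sInf E1)^2 ≤ ∫ ω, infDist (X ω) ((Γ' : Finset H) : Set H) ^ 2 ∂μ := by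
      have := pow_le_pow_left₀ ha0 h1 2
      rwa [Real.sq_sqrt hI'] at this
    have h3 : (sInf E1)^2 + δ ≤ ∫ ω, infDist (X ω) (Γ : Set H) ^ 2 ∂μ := by linarith
    calc Real.sqrt ((sInf E1)^2 + δ) ≤
        Real.sqrt (∫ ω, infDist (X ω) (Γ : Set H) ^ 2 ∂μ) := Real.sqrt_le_sqrt h3
      _ = _ := rfl
  have hfin : Real.sqrt ((sInf E1)^2 + δ) ≤ sInf E0 := le_csInf hne0 hlow
  have hstep : sInf E1 < Real.sqrt ((sInf E1)^2 + δ) :=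
    (Real.lt_sqrt ha0).mpr (by linarith)
  exact lt_of_lt_of_le hstep hfin
end

section
/- Let H be a separable Hilbert space, X ∈ L²(Ω;H), and let X̂ be an optimal Voronoi quantization of X at level N. Then X̂ is stationary: X̂ = E(X | σ(X̂)) almost surely. In particular E X̂ = E X. -/
open MeasureTheory

/-- an optimal Voronoi quantization `X̂` is stationary:
`X̂ = E(X | σ(X̂))` a.s.; in particular `E X̂ = E X`. -/
theorem optimal_quantizer_stationary
    {H Ω : Type*} [NormedAddCommGroup H] [InnerProductSpace ℝ H]
    [TopologicalSpace.SeparableSpace H] [CompleteSpace H]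
    [MeasurableSpace H] [BorelSpace H]
    {mΩ : MeasurableSpace Ω} (μ : Measure Ω) [IsProbabilityMeasure μ]
    (X : Ω → H) (hXm : Measurable X)
    (hX2 : Integrable (fun ω => ‖X ω‖ ^ 2) μ)
    (N : ℕ) (Γ : Finset H) (hΓne : Γ.Nonempty) (hΓcard : Γ.card ≤ N)
    (hopt : ∀ Γ' : Finset H, Γ'.Nonempty → Γ'.card ≤ N →
      (∫ ω, Metric.infDist (X ω) (Γ : Set H) ^ 2 ∂μ) ≤
        ∫ ω, Metric.infDist (X ω) (Γ' : Set H) ^ 2 ∂μ)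
    (p : H → H) (hpm : Measurable p)
    (hp : ∀ ξ, p ξ ∈ Γ ∧ ‖ξ - p ξ‖ = Metric.infDist ξ (Γ : Set H)) :
    μ[X | MeasurableSpace.comap (fun ω => p (X ω)) inferInstance]
        =ᵐ[μ] (fun ω => p (X ω)) ∧
      (∫ ω, p (X ω) ∂μ) = ∫ ω, X ω ∂μ := by
  classical
  haveI : SecondCountableTopology H := UniformSpace.secondCountable_of_separable H
  have hpXm : Measurable fun ω => p (X ω) := hpm.comp hXm
  -- L² membership of X
  have hX2' : MemLp X 2 μ :=
    (memLp_two_iff_integrable_sq_norm hXm.aestronglyMeasurable).2 hX2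
  have hXint : Integrable X μ := hX2'.integrable one_le_two
  -- boundedness and integrability of p ∘ X
  obtain ⟨C, hC⟩ : ∃ C : ℝ, ∀ a ∈ Γ, ‖a‖ ≤ C :=
    ⟨Γ.sup' hΓne (fun a => ‖a‖), fun a ha => Finset.le_sup' _ ha⟩
  have hpX2 : MemLp (fun ω => p (X ω)) 2 μ :=
    MemLp.of_bound hpXm.aestronglyMeasurable C
      (Filter.Eventually.of_forall fun ω => hC _ (hp (X ω)).1)
  have hpXint : Integrable (fun ω => p (X ω)) μ := hpX2.integrable one_le_two
  -- cells
  set cell : H → Set Ω := fun a => (fun ω => p (X ω)) ⁻¹' {a} with hcell_def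
  have hcellm : ∀ a, MeasurableSet (cell a) := fun a => hpXm (measurableSet_singleton a)
  have hsq : ∀ c : H, Integrable (fun ω => ‖X ω - c‖ ^ 2) μ := fun c =>
    (memLp_two_iff_integrable_sq_norm (hXm.sub measurable_const).aestronglyMeasurable).1
      (hX2'.sub (memLp_const c))
  have hsqp : Integrable (fun ω => ‖X ω - p (X ω)‖ ^ 2) μ :=
    (memLp_two_iff_integrable_sq_norm
      (hXm.sub hpXm).aestronglyMeasurable).1 (hX2'.sub hpX2)
  -- the key stationarity property on each cell
  have key : ∀ a ∈ Γ, ∫ ω in cell a, X ω ∂μ = (μ (cell a)).toReal • a := by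
    intro a ha
    by_cases h0 : μ (cell a) = 0
    · rw [Measure.restrict_eq_zero.2 h0, h0]
      simp
    set m : ℝ := (μ (cell a)).toReal with hm_def
    have hm0 : 0 < m := ENNReal.toReal_pos h0 (measure_ne_top μ _)
    set b : H := m⁻¹ • ∫ ω in cell a, X ω ∂μ with hb_def
    have hIb : ∫ ω in cell a, X ω ∂μ = m • b := (smul_inv_smul₀ hm0.ne' _).symm
    set Γ' : Finset H := insert b (Γ.erase a) with hΓ'_def
    have hne' : Γ'.Nonempty := ⟨b, Finset.mem_insert_self _ _⟩
    have hcard' : Γ'.card ≤ N := by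
      refine le_trans (Finset.card_insert_le _ _) ?_
      rw [Finset.card_erase_add_one ha]
      exact hΓcard
    set f : Ω → H := fun ω => if p (X ω) = a then b else p (X ω) with hf_def
    have hfΓ' : ∀ ω, f ω ∈ (Γ' : Set H) := by
      intro ω
      by_cases h : p (X ω) = a
      · simp [hf_def, h, hΓ'_def]
      · simp only [hf_def, if_neg h, hΓ'_def, Finset.coe_insert, Set.mem_insert_iff,
          Finset.mem_coe, Finset.mem_erase]
        exact Or.inr ⟨h, (hp (X ω)).1⟩
    have hfm : Measurable f := Measurable.ite (hcellm a) measurable_const hpXm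
    have hf2 : MemLp f 2 μ := by
      refine MemLp.of_bound hfm.aestronglyMeasurable (max ‖b‖ C)
        (Filter.Eventually.of_forall fun ω => ?_)
      by_cases h : p (X ω) = a
      · simp [hf_def, h]
      · simpa [hf_def, if_neg h] using le_max_of_le_right (hC _ (hp (X ω)).1)
    have hXfint : Integrable (fun ω => ‖X ω - f ω‖ ^ 2) μ :=
      (memLp_two_iff_integrable_sq_norm (hXm.sub hfm).aestronglyMeasurable).1 (hX2'.sub hf2)
    -- optimality chain
    have hDle : (∫ ω, ‖X ω - p (X ω)‖ ^ 2 ∂μ) ≤ ∫ ω, ‖X ω - f ω‖ ^ 2 ∂μ := by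
      have h1 : (∫ ω, Metric.infDist (X ω) (Γ : Set H) ^ 2 ∂μ)
          = ∫ ω, ‖X ω - p (X ω)‖ ^ 2 ∂μ := by
        refine integral_congr_ae (Filter.Eventually.of_forall fun ω => ?_)
        dsimp only
        rw [(hp (X ω)).2]
      have h2 : (∫ ω, Metric.infDist (X ω) (Γ' : Set H) ^ 2 ∂μ)
          ≤ ∫ ω, ‖X ω - f ω‖ ^ 2 ∂μ := by
        refine integral_mono_of_nonneg
          (Filter.Eventually.of_forall fun ω => sq_nonneg _) hXfint
          (Filter.Eventually.of_forall fun ω => ?_)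
        have h3 : Metric.infDist (X ω) (Γ' : Set H) ≤ ‖X ω - f ω‖ := by
          rw [← dist_eq_norm]
          exact Metric.infDist_le_dist_of_mem (hfΓ' ω)
        exact pow_le_pow_left₀ Metric.infDist_nonneg h3 2
      calc (∫ ω, ‖X ω - p (X ω)‖ ^ 2 ∂μ)
          = ∫ ω, Metric.infDist (X ω) (Γ : Set H) ^ 2 ∂μ := h1.symm
        _ ≤ ∫ ω, Metric.infDist (X ω) (Γ' : Set H) ^ 2 ∂μ := hopt Γ' hne' hcard'
        _ ≤ ∫ ω, ‖X ω - f ω‖ ^ 2 ∂μ := h2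
    -- split both integrals over the cell
    have hsplit1 : (∫ ω, ‖X ω - p (X ω)‖ ^ 2 ∂μ)
        = (∫ ω in cell a, ‖X ω - a‖ ^ 2 ∂μ) + ∫ ω in (cell a)ᶜ, ‖X ω - p (X ω)‖ ^ 2 ∂μ := by
      rw [← integral_add_compl (hcellm a) hsqp]
      congr 1
      refine setIntegral_congr_fun (hcellm a) fun ω hω => ?_
      have : p (X ω) = a := hω
      rw [this]
    have hsplit2 : (∫ ω, ‖X ω - f ω‖ ^ 2 ∂μ)
        = (∫ ω in cell a, ‖X ω - b‖ ^ 2 ∂μ) + ∫ ω in (cell a)ᶜ, ‖X ω - p (X ω)‖ ^ 2 ∂μ := by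
      rw [← integral_add_compl (hcellm a) hXfint]
      congr 1
      · refine setIntegral_congr_fun (hcellm a) fun ω hω => ?_
        have h : p (X ω) = a := hω
        rw [hf_def]
        simp [h]
      · refine setIntegral_congr_fun (hcellm a).compl fun ω hω => ?_
        have h : p (X ω) ≠ a := hω
        rw [hf_def]
        simp [h]
    have h1 : (∫ ω in cell a, ‖X ω - a‖ ^ 2 ∂μ) ≤ ∫ ω in cell a, ‖X ω - b‖ ^ 2 ∂μ := by
      have := hDle
      rw [hsplit1, hsplit2] at this
      linarith
    -- bias-variance expansion
    have hXa_cell : ∫ ω in cell a, (X ω - a) ∂μ = m • (b - a) := by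
      rw [integral_sub hXint.integrableOn (integrableOn_const ?_)]
      · rw [setIntegral_const, hIb, smul_sub, measureReal_def]
      · exact (lt_of_le_of_lt (measure_mono (Set.subset_univ _)) (measure_lt_top μ _)).ne
    have hXaint : Integrable (fun ω => X ω - a) μ := by
      exact hXint.sub (integrable_const a)
    have hinner_int : IntegrableOn (fun ω => (inner ℝ (b - a) (X ω - a) : ℝ)) (cell a) μ := by
      exact (hXaint.const_inner (b - a)).integrableOn
    have hinner : (∫ ω in cell a, (inner ℝ (b - a) (X ω - a) : ℝ) ∂μ) = m * ‖b - a‖ ^ 2 := by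
      have h9 : (∫ ω in cell a, (inner ℝ (b - a) (X ω - a) : ℝ) ∂μ)
          = (inner ℝ (b - a) (∫ ω in cell a, (X ω - a) ∂μ) : ℝ) :=
        integral_inner hXaint.integrableOn (b - a)
      rw [h9, hXa_cell, real_inner_smul_right, real_inner_self_eq_norm_sq]
    have hexp : (∫ ω in cell a, ‖X ω - b‖ ^ 2 ∂μ)
        = (∫ ω in cell a, ‖X ω - a‖ ^ 2 ∂μ) - m * ‖b - a‖ ^ 2 := by
      have hpt : ∀ ω, ‖X ω - b‖ ^ 2
          = ‖X ω - a‖ ^ 2 - 2 * (inner ℝ (b - a) (X ω - a) : ℝ) + ‖b - a‖ ^ 2 := by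
        intro ω
        have h4 : X ω - b = (X ω - a) - (b - a) := by abel
        rw [h4, norm_sub_sq_real, real_inner_comm]
      rw [integral_congr_ae (Filter.Eventually.of_forall fun ω => hpt ω)]
      have i2 : Integrable (fun ω => 2 * (inner ℝ (b - a) (X ω - a) : ℝ))
          (μ.restrict (cell a)) := hinner_int.const_mul 2
      have i1 : Integrable (fun ω => ‖X ω - a‖ ^ 2 - 2 * (inner ℝ (b - a) (X ω - a) : ℝ))
          (μ.restrict (cell a)) := by exact ((hsq a).integrableOn).sub i2
      have i3 : Integrable (fun _ : Ω => ‖b - a‖ ^ 2) (μ.restrict (cell a)) :=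
        integrable_const _
      rw [integral_add i1 i3, integral_sub ((hsq a).integrableOn) i2,
        integral_const_mul, hinner, setIntegral_const]
      simp only [smul_eq_mul, measureReal_def, ← hm_def]
      try ring
    have hba : b = a := by
      rw [hexp] at h1
      have h5 : m * ‖b - a‖ ^ 2 ≤ 0 := by linarith
      have h7 : ‖b - a‖ ^ 2 = 0 := by nlinarith [sq_nonneg (‖b - a‖)]
      have h8 : ‖b - a‖ = 0 := by
        have := sq_nonneg (‖b - a‖)
        nlinarith [norm_nonneg (b - a)]
      exact sub_eq_zero.1 (norm_eq_zero.1 h8)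
    rw [hIb, hba]
  -- value of the quantizer integral on each cell
  have keyp : ∀ a ∈ Γ, ∫ ω in cell a, p (X ω) ∂μ = (μ (cell a)).toReal • a := by
    intro a _
    rw [setIntegral_congr_fun (hcellm a) (fun ω hω => (hω : p (X ω) = a)), setIntegral_const, measureReal_def]
  have hle : MeasurableSpace.comap (fun ω => p (X ω)) inferInstance ≤ mΩ := hpXm.comap_le
  -- the set-integral identity
  have hseteq : ∀ s : Set Ω, MeasurableSet[MeasurableSpace.comap (fun ω => p (X ω)) inferInstance] s →
      (∫ ω in s, p (X ω) ∂μ) = ∫ ω in s, X ω ∂μ := by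
    rintro s ⟨S, hS, rfl⟩
    have hs_eq : (fun ω => p (X ω)) ⁻¹' S = ⋃ a ∈ Γ.filter (· ∈ S), cell a := by
      ext ω
      simp only [Set.mem_preimage, Set.mem_iUnion, Finset.mem_filter, hcell_def,
        Set.mem_singleton_iff, exists_prop]
      constructor
      · intro h
        exact ⟨p (X ω), ⟨(hp (X ω)).1, h⟩, rfl⟩
      · rintro ⟨a, ⟨_, haS⟩, rfl⟩
        exact haS
    have hdisj : Set.Pairwise ↑(Γ.filter (· ∈ S)) (Function.onFun Disjoint cell) := by
      intro a _ b _ hab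
      rw [Function.onFun, Set.disjoint_left]
      rintro ω (h1 : p (X ω) = a) (h2 : p (X ω) = b)
      exact hab (h1 ▸ h2)
    rw [hs_eq,
      integral_biUnion_finset _ (fun a _ => hcellm a) hdisj
        (fun a _ => hpXint.integrableOn),
      integral_biUnion_finset _ (fun a _ => hcellm a) hdisj
        (fun a _ => hXint.integrableOn)]
    refine Finset.sum_congr rfl fun a ha => ?_
    rw [keyp a (Finset.mem_of_mem_filter a ha), key a (Finset.mem_of_mem_filter a ha)]
  haveI : SigmaFinite (μ.trim hle) := by
    haveI := isFiniteMeasure_trim hle (μ := μ)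
    infer_instance
  have hAESM : AEStronglyMeasurable[
      MeasurableSpace.comap (fun ω => p (X ω)) inferInstance] (fun ω => p (X ω)) μ := by
    have hmeas : @Measurable Ω H
        (MeasurableSpace.comap (fun ω => p (X ω)) inferInstance) _ (fun ω => p (X ω)) :=
      Measurable.of_comap_le le_rfl
    exact StronglyMeasurable.aestronglyMeasurable hmeas.stronglyMeasurable
  constructor
  · exact (ae_eq_condExp_of_forall_setIntegral_eq hle hXint
      (fun s _ _ => hpXint.integrableOn) (fun s hs _ => hseteq s hs) hAESM).symm
  · have := hseteq Set.univ MeasurableSet.univ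
    rwa [setIntegral_univ, setIntegral_univ] at this
end

section
/- Let H be a separable Hilbert space, X ∈ L²(Ω;H), and Γ a finite quantizer with Voronoi quantization X̂ = X̂^Γ. Then ‖X − X̂‖₁ = sup{ |E F(X) − E F(X̂)| : F : H → ℝ with Lipschitz constant ≤ 1 }. -/
open MeasureTheory

/-- `‖X − X̂‖₁` equals the supremum (attained, hence a greatest
element) over all `1`-Lipschitz `F : H → ℝ` of `|E F(X) − E F(X̂)|`. -/
theorem L1_error_eq_sup_lipschitz
    {H Ω : Type*} [NormedAddCommGroup H] [InnerProductSpace ℝ H]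
    [TopologicalSpace.SeparableSpace H] [CompleteSpace H]
    [MeasurableSpace H] [BorelSpace H]
    {mΩ : MeasurableSpace Ω} (μ : Measure Ω) [IsProbabilityMeasure μ]
    (X : Ω → H) (hXm : Measurable X)
    (hX2 : Integrable (fun ω => ‖X ω‖ ^ 2) μ)
    (Γ : Finset H) (hΓne : Γ.Nonempty)
    (p : H → H) (hpm : Measurable p)
    (hp : ∀ ξ, p ξ ∈ Γ ∧ ‖ξ - p ξ‖ = Metric.infDist ξ (Γ : Set H)) :
    IsGreatest {r : ℝ | ∃ F : H → ℝ, LipschitzWith 1 F ∧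
        r = |(∫ ω, F (X ω) ∂μ) - ∫ ω, F (p (X ω)) ∂μ|}
      (∫ ω, ‖X ω - p (X ω)‖ ∂μ) := by
  obtain ⟨c, hc⟩ := hΓne
  have hXnorm : Integrable (fun ω => ‖X ω‖) μ := by
    refine Integrable.mono' ((integrable_const (1:ℝ)).add hX2)
      hXm.norm.aestronglyMeasurable ?_
    filter_upwards with ω
    simp only [Pi.add_apply]
    rw [Real.norm_eq_abs, abs_of_nonneg (norm_nonneg _)]
    nlinarith [norm_nonneg (X ω), sq_nonneg (‖X ω‖ - 1)]
  have hdm : Measurable (fun ω => ‖X ω - p (X ω)‖) :=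
    (hXm.sub (hpm.comp hXm)).norm
  have hd : Integrable (fun ω => ‖X ω - p (X ω)‖) μ := by
    refine Integrable.mono' (hXnorm.add (integrable_const ‖c‖)) hdm.aestronglyMeasurable ?_
    filter_upwards with ω
    rw [Real.norm_eq_abs, abs_of_nonneg (norm_nonneg _), (hp (X ω)).2]
    calc Metric.infDist (X ω) (Γ : Set H) ≤ dist (X ω) c :=
          Metric.infDist_le_dist_of_mem hc
      _ ≤ ‖X ω‖ + ‖c‖ := by rw [dist_eq_norm]; exact norm_sub_le _ _
  constructor
  · refine ⟨fun ξ => Metric.infDist ξ (Γ : Set H),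
      Metric.lipschitz_infDist_pt _, ?_⟩
    have h1 : ∀ ω, Metric.infDist (p (X ω)) (Γ : Set H) = 0 := fun ω =>
      Metric.infDist_zero_of_mem (hp (X ω)).1
    simp only [h1, integral_zero, sub_zero]
    have h2 : (∫ ω, Metric.infDist (X ω) (Γ : Set H) ∂μ)
        = ∫ ω, ‖X ω - p (X ω)‖ ∂μ := by
      congr 1 with ω; exact ((hp (X ω)).2).symm
    rw [h2, abs_of_nonneg (integral_nonneg fun ω => norm_nonneg _)]
  · rintro r ⟨F, hF, rfl⟩
    have hFX : Integrable (fun ω => F (X ω)) μ := by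
      refine Integrable.mono' (hXnorm.add (integrable_const |F 0|)) 
        ((hF.continuous.measurable.comp hXm).aestronglyMeasurable) ?_
      filter_upwards with ω
      rw [Real.norm_eq_abs]
      calc |F (X ω)| ≤ |F (X ω) - F 0| + |F 0| := by
            have := abs_sub_abs_le_abs_sub (F (X ω)) (F 0); linarith [abs_abs (F 0)]
        _ ≤ ‖X ω‖ + |F 0| := by
            have := hF.dist_le_mul (X ω) 0
            simp only [Real.dist_eq, dist_zero_right, NNReal.coe_one, one_mul] at this
            linarith
    have hFpX : Integrable (fun ω => F (p (X ω))) μ := by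
      refine Integrable.mono' ((hXnorm.add hd).add (integrable_const |F 0|))
        ((hF.continuous.measurable.comp (hpm.comp hXm)).aestronglyMeasurable) ?_
      filter_upwards with ω
      simp only [Pi.add_apply]
      rw [Real.norm_eq_abs]
      have h1 : |F (p (X ω))| ≤ |F (p (X ω)) - F 0| + |F 0| := by
        have := abs_sub_abs_le_abs_sub (F (p (X ω))) (F 0); linarith [abs_abs (F 0)]
      have h2 : |F (p (X ω)) - F 0| ≤ ‖p (X ω)‖ := by
        have := hF.dist_le_mul (p (X ω)) 0
        simp only [Real.dist_eq, dist_zero_right, NNReal.coe_one, one_mul] at this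
        exact this
      have h3 : ‖p (X ω)‖ ≤ ‖X ω‖ + ‖X ω - p (X ω)‖ := by
        calc ‖p (X ω)‖ = ‖X ω - (X ω - p (X ω))‖ := by rw [sub_sub_cancel]
          _ ≤ ‖X ω‖ + ‖X ω - p (X ω)‖ := norm_sub_le _ _
      linarith
    rw [← integral_sub hFX hFpX]
    calc |∫ ω, (F (X ω) - F (p (X ω))) ∂μ|
        ≤ ∫ ω, |F (X ω) - F (p (X ω))| ∂μ := by
          simpa [Real.norm_eq_abs] using
            norm_integral_le_integral_norm (fun ω => F (X ω) - F (p (X ω))) (μ := μ)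
      _ ≤ ∫ ω, ‖X ω - p (X ω)‖ ∂μ := by
          refine integral_mono (hFX.sub hFpX).abs hd fun ω => ?_
          have := hF.dist_le_mul (X ω) (p (X ω))
          simpa [Real.dist_eq, dist_eq_norm] using this
end

section
/- Let H be a separable Hilbert space, X ∈ L²(Ω;H), and let Γ be a stationary quantizer of X, i.e. X̂ = E(X | X̂) where X̂ = X̂^Γ. Let F : H → ℝ be Fréchet differentiable with Lipschitz differential DF (with constant [DF]_Lip). Then |E F(X) − E F(X̂)| ≤ [DF]_Lip ‖X − X̂‖₂², i.e. the quantized cubature formula is of second order at stationary quantizers. -/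
open MeasureTheory

lemma taylor_bound' {H : Type*} [NormedAddCommGroup H] [NormedSpace ℝ H]
    (F : H → ℝ) (F' : H → H →L[ℝ] ℝ) (L : NNReal)
    (hFdiff : ∀ x, HasFDerivAt F (F' x) x) (hF' : LipschitzWith L F')
    (x y : H) : |F y - F x - F' x (y - x)| ≤ (L : ℝ) * ‖y - x‖ ^ 2 := by
  set g : H → ℝ := fun z => F z - F' x z with hg_def
  have hg : ∀ z, HasFDerivAt g (F' z - F' x) z := fun z =>
    (hFdiff z).sub ((F' x).hasFDerivAt)
  have key : ‖g y - g x‖ ≤ ((L : ℝ) * ‖y - x‖) * ‖y - x‖ := by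
    apply Convex.norm_image_sub_le_of_norm_hasFDerivWithin_le
      (f' := fun z => F' z - F' x)
      (fun z _ => (hg z).hasFDerivWithinAt) ?_ (convex_segment x y)
      (left_mem_segment ℝ x y) (right_mem_segment ℝ x y)
    intro z hz
    obtain ⟨t, s, ht, hs, hts, rfl⟩ := hz
    have hz' : t • x + s • y - x = s • (y - x) := by
      have : t = 1 - s := by linarith
      simp [this, smul_sub, sub_smul, one_smul]; abel
    calc ‖F' (t • x + s • y) - F' x‖ ≤ (L : ℝ) * ‖t • x + s • y - x‖ := by
          simpa [dist_eq_norm] using hF'.dist_le_mul (t • x + s • y) x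
      _ ≤ (L : ℝ) * ‖y - x‖ := by
          rw [hz', norm_smul]
          have : |s| * ‖y - x‖ ≤ 1 * ‖y - x‖ := by
            apply mul_le_mul_of_nonneg_right _ (norm_nonneg _)
            rw [abs_of_nonneg hs]; linarith
          simp only [Real.norm_eq_abs]
          nlinarith [norm_nonneg (y - x), L.coe_nonneg]
  have : g y - g x = F y - F x - F' x (y - x) := by
    simp [hg_def, map_sub]; ring
  rw [this] at key
  calc |F y - F x - F' x (y - x)| ≤ ((L:ℝ) * ‖y - x‖) * ‖y - x‖ := key
    _ = (L : ℝ) * ‖y - x‖ ^ 2 := by ring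

/-- second-order cubature formula at a stationary quantizer:
if `X̂ = E(X|σ(X̂))` and `F` is `C¹` with Lipschitz differential `DF`
(constant `L`), then `|E F(X) − E F(X̂)| ≤ L ‖X − X̂‖₂²`. -/
theorem stationary_second_order_cubature
    {H Ω : Type*} [NormedAddCommGroup H] [InnerProductSpace ℝ H]
    [TopologicalSpace.SeparableSpace H] [CompleteSpace H]
    [MeasurableSpace H] [BorelSpace H]
    {mΩ : MeasurableSpace Ω} (μ : Measure Ω) [IsProbabilityMeasure μ]
    (X : Ω → H) (hXm : Measurable X)
    (hX2 : Integrable (fun ω => ‖X ω‖ ^ 2) μ)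
    (Γ : Finset H) (hΓne : Γ.Nonempty)
    (p : H → H) (hpm : Measurable p)
    (hp : ∀ ξ, p ξ ∈ Γ ∧ ‖ξ - p ξ‖ = Metric.infDist ξ (Γ : Set H))
    -- stationarity of the quantizer
    (hstat : μ[X | MeasurableSpace.comap (fun ω => p (X ω)) inferInstance]
      =ᵐ[μ] (fun ω => p (X ω)))
    (F : H → ℝ) (F' : H → H →L[ℝ] ℝ) (L : NNReal)
    (hFdiff : ∀ x, HasFDerivAt F (F' x) x)
    (hF' : LipschitzWith L F') :
    |(∫ ω, F (X ω) ∂μ) - ∫ ω, F (p (X ω)) ∂μ|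
      ≤ (L : ℝ) * ∫ ω, ‖X ω - p (X ω)‖ ^ 2 ∂μ := by
  classical
  have hpX : Measurable fun ω => p (X ω) := hpm.comp hXm
  have hm : MeasurableSpace.comap (fun ω => p (X ω)) inferInstance ≤ mΩ := hpX.comap_le
  -- basic integrability
  have hXsm : AEStronglyMeasurable X μ := hXm.aestronglyMeasurable
  have hX_mem2 : MemLp X 2 μ := (memLp_two_iff_integrable_sq_norm hXsm).2 hX2
  have hXint : Integrable X μ := hX_mem2.integrable one_le_two
  have hXnorm : Integrable (fun ω => ‖X ω‖) μ := hXint.norm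
  set C : ℝ := Γ.sup' hΓne (fun a => ‖a‖) with hC_def
  have hCp : ∀ ω, ‖p (X ω)‖ ≤ C := fun ω => Finset.le_sup' _ (hp (X ω)).1
  have hpXint : Integrable (fun ω => p (X ω)) μ :=
    Integrable.mono' (integrable_const C) hpX.aestronglyMeasurable
      (Filter.Eventually.of_forall hCp)
  set Δ : Ω → H := fun ω => X ω - p (X ω) with hΔ_def
  have hΔint : Integrable Δ μ := hXint.sub hpXint
  have hΔnorm_le : ∀ ω, ‖Δ ω‖ ≤ ‖X ω‖ + C := fun ω =>
    (norm_sub_le _ _).trans (by have := hCp ω; linarith)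
  -- integrability of ‖Δ‖^2
  have hΔ2int : Integrable (fun ω => ‖Δ ω‖ ^ 2) μ := by
    have hb : Integrable (fun ω => (‖X ω‖ + C) ^ 2) μ := by
      have : (fun ω => (‖X ω‖ + C) ^ 2)
          = fun ω => ‖X ω‖ ^ 2 + (2 * C) * ‖X ω‖ + C ^ 2 := by
        funext ω; ring
      rw [this]
      exact (hX2.add (hXnorm.const_mul (2 * C))).add (integrable_const _)
    refine Integrable.mono' hb ?_ (Filter.Eventually.of_forall fun ω => ?_)
    · exact ((hXm.sub hpX).norm.pow_const 2).aestronglyMeasurable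
    · have h1 : ‖Δ ω‖ ≤ ‖X ω‖ + C := hΔnorm_le ω
      have h2 : (0:ℝ) ≤ ‖Δ ω‖ := norm_nonneg _
      rw [Real.norm_eq_abs, abs_of_nonneg (by positivity)]
      nlinarith
  -- the events
  set A : H → Set Ω := fun a => (fun ω => p (X ω)) ⁻¹' {a} with hA_def
  have hAm : ∀ a, MeasurableSet[MeasurableSpace.comap (fun ω => p (X ω)) inferInstance] (A a) := fun a =>
    ⟨{a}, measurableSet_singleton a, rfl⟩
  have hAm' : ∀ a, MeasurableSet (A a) := fun a => hm _ (hAm a)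
  -- set integral of Δ over each cell is 0
  have hsetΔ : ∀ a : H, ∫ ω in A a, Δ ω ∂μ = 0 := by
    intro a
    have h1 : ∫ ω in A a, (μ[X|MeasurableSpace.comap (fun ω => p (X ω)) inferInstance]) ω ∂μ = ∫ ω in A a, X ω ∂μ :=
      setIntegral_condExp hm hXint (hAm a)
    have h2 : ∫ ω in A a, (μ[X|MeasurableSpace.comap (fun ω => p (X ω)) inferInstance]) ω ∂μ = ∫ ω in A a, p (X ω) ∂μ :=
      setIntegral_congr_ae (hAm' a) (hstat.mono fun ω hω => fun _ => hω)
    rw [hΔ_def]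
    rw [integral_sub (hXint.integrableOn) (hpXint.integrableOn), ← h1, h2, sub_self]
  -- linear term integrates to 0
  have hpoint : ∀ ω, (F' (p (X ω))) (Δ ω)
      = ∑ a ∈ Γ, (A a).indicator (fun ω => F' a (Δ ω)) ω := by
    intro ω
    rw [Finset.sum_eq_single_of_mem (p (X ω)) (hp (X ω)).1]
    · rw [Set.indicator_of_mem]; exact rfl
    · intro a _ ha
      exact Set.indicator_of_notMem (fun h => ha (Set.mem_preimage.1 h).symm) _
  have hlin_int : ∀ a : H, Integrable ((A a).indicator (fun ω => F' a (Δ ω))) μ := by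
    intro a
    refine (Integrable.indicator ?_ (hAm' a))
    exact ((F' a).integrable_comp hΔint)
  have hlinint : Integrable (fun ω => F' (p (X ω)) (Δ ω)) μ := by
    have : (fun ω => F' (p (X ω)) (Δ ω))
        = fun ω => ∑ a ∈ Γ, (A a).indicator (fun ω => F' a (Δ ω)) ω := by
      funext ω; exact hpoint ω
    rw [this]
    exact integrable_finset_sum _ fun a _ => hlin_int a
  have hI3 : ∫ ω, F' (p (X ω)) (Δ ω) ∂μ = 0 := by
    have : ∫ ω, F' (p (X ω)) (Δ ω) ∂μ
        = ∑ a ∈ Γ, ∫ ω, (A a).indicator (fun ω => F' a (Δ ω)) ω ∂μ := by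
      rw [← integral_finset_sum _ fun a _ => hlin_int a]
      exact integral_congr_ae (Filter.Eventually.of_forall hpoint)
    rw [this]
    refine Finset.sum_eq_zero fun a _ => ?_
    rw [integral_indicator (hAm' a)]
    rw [ContinuousLinearMap.integral_comp_comm _ hΔint.integrableOn, hsetΔ a, map_zero]
  -- integrability of F ∘ X
  have hFc : Continuous F := continuous_iff_continuousAt.2 fun x => (hFdiff x).continuousAt
  have hFXint : Integrable (fun ω => F (X ω)) μ := by
    have hb : Integrable (fun ω => |F 0| + ‖F' 0‖ * ‖X ω‖ + (L : ℝ) * ‖X ω‖ ^ 2) μ :=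
      ((integrable_const _).add (hXnorm.const_mul _)).add (hX2.const_mul _)
    refine Integrable.mono' hb (hFc.measurable.comp hXm).aestronglyMeasurable
      (Filter.Eventually.of_forall fun ω => ?_)
    have ht := taylor_bound' F F' L hFdiff hF' 0 (X ω)
    simp only [sub_zero] at ht
    have h1 : |F' 0 (X ω)| ≤ ‖F' 0‖ * ‖X ω‖ := (F' 0).le_opNorm (X ω)
    rw [Real.norm_eq_abs]
    have := abs_sub_abs_le_abs_sub (F (X ω)) (F 0 + F' 0 (X ω))
    have h2 : |F (X ω) - (F 0 + F' 0 (X ω))| ≤ (L:ℝ) * ‖X ω‖ ^ 2 := by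
      convert ht using 2; ring
    have h3 : |F 0 + F' 0 (X ω)| ≤ |F 0| + |F' 0 (X ω)| := abs_add_le _ _
    linarith
  -- integrability of F ∘ p ∘ X
  have hFpXint : Integrable (fun ω => F (p (X ω))) μ := by
    set D : ℝ := Γ.sup' hΓne (fun a => |F a|) with hD_def
    refine Integrable.mono' (integrable_const D)
      (hFc.measurable.comp hpX).aestronglyMeasurable
      (Filter.Eventually.of_forall fun ω => ?_)
    rw [Real.norm_eq_abs]
    exact Finset.le_sup' (fun a => |F a|) (hp (X ω)).1
  -- assemble
  have hF12 : Integrable (fun ω => F (X ω) - F (p (X ω))) μ := hFXint.sub hFpXint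
  have hGint : Integrable (fun ω => F (X ω) - F (p (X ω)) - F' (p (X ω)) (Δ ω)) μ :=
    hF12.sub hlinint
  have hsplit : ∫ ω, (F (X ω) - F (p (X ω)) - F' (p (X ω)) (Δ ω)) ∂μ
      = (∫ ω, F (X ω) ∂μ) - ∫ ω, F (p (X ω)) ∂μ := by
    rw [integral_sub hF12 hlinint, integral_sub hFXint hFpXint, hI3, sub_zero]
  calc |(∫ ω, F (X ω) ∂μ) - ∫ ω, F (p (X ω)) ∂μ|
      = |∫ ω, (F (X ω) - F (p (X ω)) - F' (p (X ω)) (Δ ω)) ∂μ| := by rw [hsplit]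
    _ ≤ ∫ ω, |F (X ω) - F (p (X ω)) - F' (p (X ω)) (Δ ω)| ∂μ := by
        simpa [Real.norm_eq_abs] using norm_integral_le_integral_norm
          (fun ω => F (X ω) - F (p (X ω)) - F' (p (X ω)) (Δ ω)) (μ := μ)
    _ ≤ ∫ ω, (L : ℝ) * ‖Δ ω‖ ^ 2 ∂μ := by
        refine integral_mono hGint.abs (hΔ2int.const_mul _) fun ω => ?_
        have := taylor_bound' F F' L hFdiff hF' (p (X ω)) (X ω)
        simpa [hΔ_def] using this
    _ = (L : ℝ) * ∫ ω, ‖X ω - p (X ω)‖ ^ 2 ∂μ := by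
        rw [integral_const_mul]
end

section
/- Let X, Y be H-valued random vectors, F : H → ℝ Lipschitz with constant [F]_Lip, and suppose E(F(X)|Y) = φ(Y) where φ : H → ℝ is Lipschitz with constant [φ]_Lip. Let X̂, Ŷ be quantizations of X and Y respectively, with Ŷ σ(Y)-measurable. Then ‖E(F(X)|Y) − E(F(X̂)|Ŷ)‖₂ ≤ [F]_Lip ‖X − X̂‖₂ + [φ]_Lip ‖Y − Ŷ‖₂. -/
open MeasureTheory

section Aux

variable {Ω : Type*} {m m0 : MeasurableSpace Ω} {μ : Measure Ω}

/-- For a finite measure, `condexp` on an `L²` function agrees a.e. with `condexpL2`. -/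
lemma my_condexp_ae_eq_condexpL2 (hm : m ≤ m0) [IsFiniteMeasure μ] (f : Lp ℝ 2 μ) :
    μ[⇑f|m] =ᵐ[μ] ⇑(condExpL2 ℝ ℝ hm f : Lp ℝ 2 μ) := by
  haveI : IsFiniteMeasure (μ.trim hm) := isFiniteMeasure_trim hm
  exact (ae_eq_condExp_of_forall_setIntegral_eq hm ((Lp.memLp f).integrable one_le_two)
    (fun s _ _ => ((Lp.memLp ((condExpL2 ℝ ℝ hm f : Lp ℝ 2 μ))).integrable one_le_two).integrableOn)
    (fun s hs hμs => integral_condExpL2_eq hm f hs hμs.ne)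
    (aestronglyMeasurable_condExpL2 hm f)).symm

lemma my_eLpNorm_le_of_norm_le (A B : Lp ℝ 2 μ) (h : ‖A‖ ≤ ‖B‖) :
    eLpNorm (⇑A) 2 μ ≤ eLpNorm (⇑B) 2 μ := by
  rw [Lp.norm_def, Lp.norm_def] at h
  exact (ENNReal.toReal_le_toReal (Lp.eLpNorm_ne_top A) (Lp.eLpNorm_ne_top B)).mp h

/-- L² contraction property of the conditional expectation. -/
lemma my_eLpNorm_condexp_le (hm : m ≤ m0) [IsFiniteMeasure μ] {f : Ω → ℝ}
    (hf : MemLp f 2 μ) : eLpNorm (μ[f|m]) 2 μ ≤ eLpNorm f 2 μ := by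
  have h1 : eLpNorm (μ[f|m]) 2 μ = eLpNorm (⇑(condExpL2 ℝ ℝ hm (hf.toLp f) : Lp ℝ 2 μ)) 2 μ :=
    eLpNorm_congr_ae ((condExp_congr_ae hf.coeFn_toLp.symm).trans
      (my_condexp_ae_eq_condexpL2 hm (hf.toLp f)))
  have h2 : eLpNorm f 2 μ = eLpNorm (⇑(hf.toLp f)) 2 μ := eLpNorm_congr_ae hf.coeFn_toLp.symm
  rw [h1, h2]
  exact eLpNorm_condExpL2_le hm (hf.toLp f)

/-- Best approximation property of the conditional expectation in L². -/
lemma my_eLpNorm_sub_condexp_le (hm : m ≤ m0) [IsFiniteMeasure μ] {f g : Ω → ℝ}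
    (hf : MemLp f 2 μ) (hg : MemLp g 2 μ) (hgm : AEStronglyMeasurable[m] g μ) :
    eLpNorm (fun ω => f ω - (μ[f|m]) ω) 2 μ ≤ eLpNorm (fun ω => f ω - g ω) 2 μ := by
  set F := hf.toLp f with hF
  set G := hg.toLp g with hG
  have hGmem : G ∈ lpMeas ℝ ℝ m 2 μ :=
    mem_lpMeas_iff_aestronglyMeasurable.2 (hgm.congr hg.coeFn_toLp.symm)
  haveI : Fact (m ≤ m0) := ⟨hm⟩
  have hproj : ‖F - ↑(condExpL2 ℝ ℝ hm F)‖ ≤ ‖F - G‖ := by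
    have hrfl : (condExpL2 ℝ ℝ hm F : Lp ℝ 2 μ) =
        (lpMeas ℝ ℝ m 2 μ).starProjection F := rfl
    rw [hrfl, Submodule.starProjection_minimal]
    refine ciInf_le ⟨0, ?_⟩ (⟨G, hGmem⟩ : lpMeas ℝ ℝ m 2 μ)
    rintro x ⟨y, rfl⟩; exact norm_nonneg _
  have h1 : eLpNorm (fun ω => f ω - (μ[f|m]) ω) 2 μ
      = eLpNorm (⇑(F - ↑(condExpL2 ℝ ℝ hm F))) 2 μ := by
    refine eLpNorm_congr_ae ?_
    have hc : μ[f|m] =ᵐ[μ] ⇑(condExpL2 ℝ ℝ hm F : Lp ℝ 2 μ) :=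
      (condExp_congr_ae hf.coeFn_toLp.symm).trans (my_condexp_ae_eq_condexpL2 hm F)
    filter_upwards [Lp.coeFn_sub F (↑(condExpL2 ℝ ℝ hm F)), hf.coeFn_toLp, hc] with ω e1 e2 e3
    simp only [Pi.sub_apply] at e1
    rw [e1, e2, e3]
  have h2 : eLpNorm (fun ω => f ω - g ω) 2 μ = eLpNorm (⇑(F - G)) 2 μ := by
    refine eLpNorm_congr_ae ?_
    filter_upwards [Lp.coeFn_sub F G, hf.coeFn_toLp, hg.coeFn_toLp] with ω e1 e2 e3
    simp only [Pi.sub_apply] at e1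
    rw [e1, e2, e3]
  rw [h1, h2]
  exact my_eLpNorm_le_of_norm_le _ _ hproj

variable {H : Type*} [NormedAddCommGroup H]

lemma my_memLp_lipschitz_comp [IsFiniteMeasure μ] {f : Ω → H}
    (hfm : AEStronglyMeasurable f μ) (hf : MemLp f 2 μ) {F : H → ℝ} {K : NNReal}
    (hF : LipschitzWith K F) : MemLp (fun ω => F (f ω)) 2 μ := by
  have h1 : MemLp (fun ω => F (f ω) - F 0) 2 μ := by
    refine MemLp.of_le (hf.norm.const_mul (K : ℝ))
      ((hF.continuous.comp_aestronglyMeasurable hfm).sub aestronglyMeasurable_const) ?_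
    refine Filter.Eventually.of_forall fun ω => ?_
    have hd : dist (F (f ω)) (F 0) ≤ (K : ℝ) * dist (f ω) 0 := hF.dist_le_mul _ _
    rw [Real.dist_eq, dist_zero_right] at hd
    calc ‖F (f ω) - F 0‖ = |F (f ω) - F 0| := rfl
      _ ≤ (K : ℝ) * ‖f ω‖ := hd
      _ ≤ ‖(K : ℝ) * ‖f ω‖‖ := le_abs_self _
  have h2 := h1.add (memLp_const (F 0))
  have : (fun ω => F (f ω) - F 0) + (fun _ => F 0) = fun ω => F (f ω) := by
    funext ω; simp
  rwa [this] at h2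

lemma my_memLp_of_finite_range [IsFiniteMeasure μ] {g : Ω → H}
    (hgm : AEStronglyMeasurable g μ) (hfin : (Set.range g).Finite) : MemLp g 2 μ := by
  obtain ⟨C, hC⟩ := (hfin.image norm).bddAbove
  refine MemLp.of_bound hgm C (Filter.Eventually.of_forall fun ω => ?_)
  exact hC ⟨g ω, Set.mem_range_self ω, rfl⟩

lemma my_eLpNorm_lipschitz_sub {F : H → ℝ} {K : NNReal} (hF : LipschitzWith K F)
    (f g : Ω → H) :
    eLpNorm (fun ω => F (f ω) - F (g ω)) 2 μ
      ≤ (K : ENNReal) * eLpNorm (fun ω => f ω - g ω) 2 μ := by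
  have hb : ∀ ω, ‖F (f ω) - F (g ω)‖ ≤ ‖(K : ℝ) * ‖f ω - g ω‖‖ := by
    intro ω
    have hd : dist (F (f ω)) (F (g ω)) ≤ (K : ℝ) * dist (f ω) (g ω) := hF.dist_le_mul _ _
    rw [Real.dist_eq, dist_eq_norm] at hd
    calc ‖F (f ω) - F (g ω)‖ = |F (f ω) - F (g ω)| := rfl
      _ ≤ (K : ℝ) * ‖f ω - g ω‖ := hd
      _ ≤ ‖(K : ℝ) * ‖f ω - g ω‖‖ := le_abs_self _
  calc eLpNorm (fun ω => F (f ω) - F (g ω)) 2 μ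
      ≤ eLpNorm (fun ω => (K : ℝ) * ‖f ω - g ω‖) 2 μ := eLpNorm_mono hb
    _ = ‖(K : ℝ)‖₊ * eLpNorm (fun ω => ‖f ω - g ω‖) 2 μ := by
        exact eLpNorm_const_smul (K : ℝ) (fun ω => ‖f ω - g ω‖) 2 μ
    _ = (K : ENNReal) * eLpNorm (fun ω => f ω - g ω) 2 μ := by
        rw [eLpNorm_norm]
        congr 1
        simp only [Real.nnnorm_of_nonneg K.coe_nonneg]
        rfl

end Aux

/-- quantized approximation of a conditional expectation:
`‖E(F(X)|Y) − E(F(X̂)|Ŷ)‖₂ ≤ [F]_Lip ‖X − X̂‖₂ + [φ]_Lip ‖Y − Ŷ‖₂`. -/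
theorem quantized_conditional_expectation
    {H Ω : Type*} [NormedAddCommGroup H] [InnerProductSpace ℝ H]
    [TopologicalSpace.SeparableSpace H] [CompleteSpace H]
    [MeasurableSpace H] [BorelSpace H]
    {mΩ : MeasurableSpace Ω} (μ : Measure Ω) [IsProbabilityMeasure μ]
    (X Y : Ω → H) (hXm : Measurable X) (hYm : Measurable Y)
    (hX2 : Integrable (fun ω => ‖X ω‖ ^ 2) μ)
    (hY2 : Integrable (fun ω => ‖Y ω‖ ^ 2) μ)
    (Xq Yq : Ω → H) (hXqm : Measurable Xq)
    (hXqfin : (Set.range Xq).Finite) (hYqfin : (Set.range Yq).Finite)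
    -- `Ŷ` is `σ(Y)`-measurable
    (hYqm : Measurable[MeasurableSpace.comap Y inferInstance] Yq)
    (F : H → ℝ) (KF : NNReal) (hF : LipschitzWith KF F)
    (φ : H → ℝ) (Kφ : NNReal) (hφ : LipschitzWith Kφ φ)
    -- `φ` is a version of the conditional expectation of `F(X)` given `Y`
    (hφver : μ[(fun ω => F (X ω)) | MeasurableSpace.comap Y inferInstance]
      =ᵐ[μ] (fun ω => φ (Y ω))) :
    eLpNorm (fun ω =>
        (μ[(fun ω' => F (X ω')) | MeasurableSpace.comap Y inferInstance]) ω
          - (μ[(fun ω' => F (Xq ω')) | MeasurableSpace.comap Yq inferInstance]) ω)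
        2 μ
      ≤ (KF : ENNReal) * eLpNorm (fun ω => X ω - Xq ω) 2 μ
        + (Kφ : ENNReal) * eLpNorm (fun ω => Y ω - Yq ω) 2 μ := by
  set m := MeasurableSpace.comap Y inferInstance with hm_def
  set mq := MeasurableSpace.comap Yq inferInstance with hmq_def
  have hm : m ≤ mΩ := hYm.comap_le
  have hYqM : Measurable[mΩ] Yq := hYqm.mono hm le_rfl
  have hmq : mq ≤ mΩ := Measurable.comap_le hYqM
  have hmq_le : mq ≤ m := hYqm.comap_le
  haveI hfin_m : IsFiniteMeasure (μ.trim hm) := isFiniteMeasure_trim hm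
  haveI hfin_mq : IsFiniteMeasure (μ.trim hmq) := isFiniteMeasure_trim hmq
  -- membership in L²
  have hXmem : MemLp X 2 μ :=
    (memLp_two_iff_integrable_sq_norm hXm.aestronglyMeasurable).2 hX2
  have hYmem : MemLp Y 2 μ :=
    (memLp_two_iff_integrable_sq_norm hYm.aestronglyMeasurable).2 hY2
  have hXqmem : MemLp Xq 2 μ := my_memLp_of_finite_range hXqm.aestronglyMeasurable hXqfin
  have hYqmem : MemLp Yq 2 μ := my_memLp_of_finite_range hYqM.aestronglyMeasurable hYqfin
  have hFX : MemLp (fun ω => F (X ω)) 2 μ :=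
    my_memLp_lipschitz_comp hXm.aestronglyMeasurable hXmem hF
  have hFXq : MemLp (fun ω => F (Xq ω)) 2 μ :=
    my_memLp_lipschitz_comp hXqm.aestronglyMeasurable hXqmem hF
  have hφY : MemLp (fun ω => φ (Y ω)) 2 μ :=
    my_memLp_lipschitz_comp hYm.aestronglyMeasurable hYmem hφ
  have hφYq : MemLp (fun ω => φ (Yq ω)) 2 μ :=
    my_memLp_lipschitz_comp hYqM.aestronglyMeasurable hYqmem hφ
  -- tower property
  have htower : μ[(fun ω => F (X ω))|mq] =ᵐ[μ] μ[(fun ω => φ (Y ω))|mq] :=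
    (condExp_condExp_of_le hmq_le hm (f := fun ω => F (X ω))).symm.trans
      (condExp_congr_ae hφver)
  -- conditional expectation of differences
  have hsub : μ[(fun ω => F (X ω) - F (Xq ω))|mq]
      =ᵐ[μ] μ[(fun ω => F (X ω))|mq] - μ[(fun ω => F (Xq ω))|mq] :=
    condExp_sub (hFX.integrable one_le_two) (hFXq.integrable one_le_two) mq
  -- decomposition
  have hdecomp : (fun ω =>
        (μ[(fun ω' => F (X ω'))|m]) ω - (μ[(fun ω' => F (Xq ω'))|mq]) ω)
      =ᵐ[μ] (fun ω => (φ (Y ω) - (μ[(fun ω' => φ (Y ω'))|mq]) ω)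
        + (μ[(fun ω' => F (X ω') - F (Xq ω'))|mq]) ω) := by
    filter_upwards [hφver, htower, hsub] with ω h1 h2 h3
    simp only [Pi.sub_apply] at h2 h3 ⊢
    rw [h1, h3, h2]
    ring
  -- measurability of the two summands
  have meas1 : AEStronglyMeasurable[mΩ]
      (fun ω => φ (Y ω) - (μ[(fun ω' => φ (Y ω'))|mq]) ω) μ :=
    (hφ.continuous.measurable.comp hYm).aestronglyMeasurable.sub
      (stronglyMeasurable_condExp.mono hmq).aestronglyMeasurable
  have meas2 : AEStronglyMeasurable[mΩ]
      (μ[(fun ω' => F (X ω') - F (Xq ω'))|mq]) μ :=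
    (stronglyMeasurable_condExp.mono hmq).aestronglyMeasurable
  -- bound for the first summand
  have hφYq_meas : AEStronglyMeasurable[mq] (fun ω => φ (Yq ω)) μ := by
    have hYq_self : Measurable[mq] Yq := measurable_iff_comap_le.2 le_rfl
    exact ((hφ.continuous.measurable.comp hYq_self).stronglyMeasurable).aestronglyMeasurable
  have hbound1 : eLpNorm (fun ω => φ (Y ω) - (μ[(fun ω' => φ (Y ω'))|mq]) ω) 2 μ
      ≤ (Kφ : ENNReal) * eLpNorm (fun ω => Y ω - Yq ω) 2 μ :=
    (my_eLpNorm_sub_condexp_le hmq hφY hφYq hφYq_meas).trans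
      (my_eLpNorm_lipschitz_sub hφ Y Yq)
  -- bound for the second summand
  have hbound2 : eLpNorm (μ[(fun ω' => F (X ω') - F (Xq ω'))|mq]) 2 μ
      ≤ (KF : ENNReal) * eLpNorm (fun ω => X ω - Xq ω) 2 μ :=
    (my_eLpNorm_condexp_le hmq (hFX.sub hFXq)).trans
      (my_eLpNorm_lipschitz_sub hF X Xq)
  calc eLpNorm (fun ω =>
        (μ[(fun ω' => F (X ω'))|m]) ω - (μ[(fun ω' => F (Xq ω'))|mq]) ω) 2 μ
      = eLpNorm ((fun ω => φ (Y ω) - (μ[(fun ω' => φ (Y ω'))|mq]) ω)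
          + (μ[(fun ω' => F (X ω') - F (Xq ω'))|mq])) 2 μ := eLpNorm_congr_ae hdecomp
    _ ≤ eLpNorm (fun ω => φ (Y ω) - (μ[(fun ω' => φ (Y ω'))|mq]) ω) 2 μ
        + eLpNorm (μ[(fun ω' => F (X ω') - F (Xq ω'))|mq]) 2 μ :=
        eLpNorm_add_le meas1 meas2 one_le_two
    _ ≤ (Kφ : ENNReal) * eLpNorm (fun ω => Y ω - Yq ω) 2 μ
        + (KF : ENNReal) * eLpNorm (fun ω => X ω - Xq ω) 2 μ :=
        add_le_add hbound1 hbound2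
    _ = _ := add_comm _ _
end

section
/- For the uniform distribution U on an interval [a,b], the unique optimal quadratic N-quantizer is the midpoint grid Γ = { a + (2k−1)(b−a)/(2N) : k = 1,…,N }, and the resulting minimal quadratic quantization error equals (b−a)/(2N√3). -/
open MeasureTheory Metric Finset

noncomputable def spt (Γ : Finset ℝ) (i : ℕ) : ℝ :=
  if h : i < Γ.card then (Γ.orderIsoOfFin rfl ⟨i, h⟩ : ℝ) else 0

lemma spt_mem {Γ : Finset ℝ} {i : ℕ} (h : i < Γ.card) : spt Γ i ∈ Γ := by
  rw [spt, dif_pos h]; exact (Γ.orderIsoOfFin rfl ⟨i, h⟩).2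

lemma spt_lt {Γ : Finset ℝ} {i j : ℕ} (hij : i < j) (h : j < Γ.card) :
    spt Γ i < spt Γ j := by
  rw [spt, spt, dif_pos h, dif_pos (hij.trans h)]
  exact_mod_cast (Γ.orderIsoOfFin rfl).strictMono (show (⟨i, hij.trans h⟩ : Fin _) < ⟨j, h⟩ from hij)

lemma spt_surj {Γ : Finset ℝ} {y : ℝ} (hy : y ∈ Γ) : ∃ i < Γ.card, spt Γ i = y := by
  obtain ⟨i, hi⟩ := (Γ.orderIsoOfFin rfl).surjective ⟨y, hy⟩
  exact ⟨i.1, i.2, by rw [spt, dif_pos i.2]; simp [Fin.eta, hi]⟩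

noncomputable def cut (a b : ℝ) (Γ : Finset ℝ) (i : ℕ) : ℝ :=
  if i = 0 then a else if Γ.card ≤ i then b
  else min b (max a ((spt Γ (i-1) + spt Γ i)/2))

lemma cut_mem {a b : ℝ} (hab : a ≤ b) (Γ : Finset ℝ) (i : ℕ) :
    a ≤ cut a b Γ i ∧ cut a b Γ i ≤ b := by
  rw [cut]
  split_ifs with h1 h2
  · exact ⟨le_refl a, hab⟩
  · exact ⟨hab, le_refl b⟩
  · constructor
    · exact le_min hab (le_max_left _ _)
    · exact min_le_left _ _

lemma cut_zero (a b : ℝ) (Γ : Finset ℝ) : cut a b Γ 0 = a := by simp [cut]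

lemma cut_card {a b : ℝ} {Γ : Finset ℝ} (h : Γ.Nonempty) : cut a b Γ Γ.card = b := by
  rw [cut, if_neg, if_pos le_rfl]
  exact (Finset.card_pos.mpr h).ne'

lemma cut_mono {a b : ℝ} (hab : a ≤ b) (Γ : Finset ℝ) : Monotone (cut a b Γ) := by
  apply monotone_nat_of_le_succ
  intro i
  rcases Nat.eq_zero_or_pos i with rfl | hi
  · exact (cut_mem hab Γ 1).1.trans_eq' (cut_zero a b Γ).symm
  by_cases h2 : Γ.card ≤ i + 1
  · rw [show cut a b Γ (i+1) = b by rw [cut, if_neg (Nat.succ_ne_zero i), if_pos h2]]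
    exact (cut_mem hab Γ i).2
  · have h1 : ¬ Γ.card ≤ i := fun h => h2 (h.trans i.le_succ)
    rw [cut, cut, if_neg hi.ne', if_neg (Nat.succ_ne_zero i), if_neg h1, if_neg h2]
    apply min_le_min le_rfl
    apply max_le_max le_rfl
    have : spt Γ (i-1) ≤ spt Γ i := (spt_lt (Nat.sub_lt hi one_pos) (lt_of_not_ge h1)).le
    have : spt Γ i ≤ spt Γ (i+1-1) := by simp
    have : spt Γ i ≤ spt Γ (i+1) := (spt_lt (Nat.lt_succ_self i) (lt_of_not_ge h2)).le
    linarith [spt_lt (Nat.sub_lt hi one_pos) (lt_of_not_ge h1)]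

lemma abs_sub_le_of_mid {p q x : ℝ} (hpq : p ≤ q) (h : p + q ≤ 2*x) : |x - q| ≤ |x - p| := by
  rw [← Real.sqrt_sq_eq_abs, ← Real.sqrt_sq_eq_abs]
  exact Real.sqrt_le_sqrt (by nlinarith)

lemma abs_sub_le_of_mid' {p q x : ℝ} (hpq : p ≤ q) (h : 2*x ≤ p + q) : |x - p| ≤ |x - q| := by
  rw [← Real.sqrt_sq_eq_abs, ← Real.sqrt_sq_eq_abs]
  exact Real.sqrt_le_sqrt (by nlinarith)

lemma infDist_cell {a b : ℝ} (hab : a ≤ b) {Γ : Finset ℝ} (hne : Γ.Nonempty) {i : ℕ}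
    (hi : i < Γ.card) (hlt : cut a b Γ i < cut a b Γ (i+1)) {x : ℝ}
    (hx : x ∈ Set.Icc (cut a b Γ i) (cut a b Γ (i+1))) :
    infDist x (Γ : Set ℝ) = |x - spt Γ i| := by
  have hnes : (Γ : Set ℝ).Nonempty := by exact_mod_cast hne
  apply le_antisymm
  · rw [← Real.dist_eq]
    exact infDist_le_dist_of_mem (by exact_mod_cast spt_mem hi)
  · by_contra hcon
    push_neg at hcon
    obtain ⟨y, hy, hd⟩ := (infDist_lt_iff hnes).mp hcon
    rw [Real.dist_eq] at hd
    obtain ⟨j, hj, rfl⟩ := spt_surj (by exact_mod_cast hy)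
    rcases lt_trichotomy j i with hji | rfl | hij
    · -- j < i : x is right of midpoint of (spt j, spt i)
      have h1 : i ≠ 0 := by omega
      have h2 : ¬ Γ.card ≤ i := by omega
      have hcutlt : cut a b Γ i < b := lt_of_lt_of_le hlt (cut_mem hab Γ (i+1)).2
      have hcuti : (spt Γ (i-1) + spt Γ i)/2 ≤ cut a b Γ i := by
        rw [cut, if_neg h1, if_neg h2] at hcutlt ⊢
        rcases le_or_gt b (max a ((spt Γ (i-1) + spt Γ i)/2)) with h | h
        · exact absurd (min_eq_left h) (by intro he; rw [he] at hcutlt; exact absurd hcutlt (lt_irrefl b))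
        · rw [min_eq_right h.le]; exact le_max_right _ _
      have hsj : spt Γ j ≤ spt Γ (i-1) := by
        rcases eq_or_lt_of_le (Nat.le_sub_one_of_lt hji) with he | hlt'
        · rw [he]
        · exact (spt_lt hlt' (by omega)).le
      have : spt Γ j + spt Γ i ≤ 2*x := by
        have := hx.1
        nlinarith [hcuti, hsj]
      exact absurd hd (not_lt.mpr (abs_sub_le_of_mid (le_of_lt (spt_lt hji hi)) this))
    · exact absurd hd (not_lt.mpr le_rfl)
    · -- i < j : x is left of midpoint of (spt i, spt j)
      have h1 : i + 1 ≠ 0 := Nat.succ_ne_zero i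
      have h2 : ¬ Γ.card ≤ i + 1 := by omega
      have hcutgt : a < cut a b Γ (i+1) := lt_of_le_of_lt (cut_mem hab Γ i).1 hlt
      have hcuti : cut a b Γ (i+1) ≤ (spt Γ i + spt Γ (i+1))/2 := by
        rw [cut, if_neg h1, if_neg h2] at hcutgt ⊢
        simp only [Nat.add_sub_cancel] at hcutgt ⊢
        rcases le_or_gt ((spt Γ i + spt Γ (i+1))/2) a with h | h
        · exact absurd (max_eq_left h) (by intro he; rw [he, min_eq_right hab] at hcutgt; exact absurd hcutgt (lt_irrefl a))
        · rw [max_eq_right h.le]; exact min_le_right _ _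
      have hsj : spt Γ (i+1) ≤ spt Γ j := by
        rcases eq_or_lt_of_le (show i + 1 ≤ j from hij) with he | hlt'
        · exact le_of_eq (congrArg (spt Γ) he)
        · exact (spt_lt hlt' hj).le
      have : 2*x ≤ spt Γ i + spt Γ j := by
        have := hx.2
        nlinarith [hcuti, hsj]
      exact absurd hd (not_lt.mpr (abs_sub_le_of_mid' (le_of_lt (spt_lt hij hj)) this))

lemma integral_sq_shift (u v p : ℝ) :
    ∫ x in u..v, (x - p)^2 = (v-u)^3/12 + (v-u)*(p - (u+v)/2)^2 := by
  have : ∫ x in u..v, (x - p)^2 = ∫ x in (u-p)..(v-p), x^2 := by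
    rw [← intervalIntegral.integral_comp_sub_right (fun x => x^2) p]
  rw [this, integral_pow]
  ring

lemma decomposition {a b : ℝ} (hab : a ≤ b) {Γ : Finset ℝ} (hne : Γ.Nonempty) :
    ∫ x in a..b, infDist x (Γ : Set ℝ) ^ 2 =
      ∑ i ∈ Finset.range Γ.card,
        ((cut a b Γ (i+1) - cut a b Γ i)^3/12 +
          (cut a b Γ (i+1) - cut a b Γ i) * (spt Γ i - (cut a b Γ i + cut a b Γ (i+1))/2)^2) := by
  have hcont : Continuous (fun x : ℝ => infDist x (Γ : Set ℝ) ^ 2) :=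
    (continuous_infDist_pt (Γ : Set ℝ)).pow 2
  have hsum := intervalIntegral.sum_integral_adjacent_intervals (a := cut a b Γ) (n := Γ.card)
    (f := fun x => infDist x (Γ : Set ℝ) ^ 2) (fun k _ => hcont.intervalIntegrable (μ := volume) _ _)
  rw [cut_zero, cut_card hne] at hsum
  rw [← hsum]
  apply Finset.sum_congr rfl
  intro i hi
  rw [Finset.mem_range] at hi
  rcases eq_or_lt_of_le (cut_mono hab Γ (Nat.le_succ i)) with he | hlt
  · rw [← he, intervalIntegral.integral_same]; ring
  · have heq : Set.EqOn (fun x => infDist x (Γ : Set ℝ) ^ 2) (fun x => (x - spt Γ i)^2)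
        (Set.uIcc (cut a b Γ i) (cut a b Γ (i+1))) := by
      intro x hx
      rw [Set.uIcc_of_le hlt.le] at hx
      show infDist x (Γ : Set ℝ) ^ 2 = (x - spt Γ i)^2
      rw [infDist_cell hab hne hi hlt hx]
      exact sq_abs _
    rw [intervalIntegral.integral_congr heq, integral_sq_shift]

lemma sumB {S : ℝ} (hS : 0 < S) {n N : ℕ} (hn : 0 < n) (hnN : n ≤ N) (L d : ℕ → ℝ)
    (hL : ∀ i < n, 0 ≤ L i) (hsum : ∑ i ∈ Finset.range n, L i = S) :
    S^3/(12*N^2) ≤ ∑ i ∈ Finset.range n, (L i^3/12 + L i * d i^2) ∧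
    (∑ i ∈ Finset.range n, (L i^3/12 + L i * d i^2) = S^3/(12*N^2) →
      n = N ∧ ∀ i < n, L i = S/N ∧ d i = 0) := by
  have hn' : (0:ℝ) < n := by exact_mod_cast hn
  have hN' : (0:ℝ) < N := lt_of_lt_of_le hn' (by exact_mod_cast hnN)
  set c : ℝ := S / n with hc
  have hcpos : 0 < c := div_pos hS hn'
  have key : ∑ i ∈ Finset.range n, (L i^3/12 + L i * d i^2)
      - ∑ i ∈ Finset.range n, ((2*c + L i)*(L i - c)^2/12 + L i * d i^2)
      = S^3/(12*(n:ℝ)^2) := by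
    rw [← Finset.sum_sub_distrib]
    have hterm : ∀ i ∈ Finset.range n,
        (L i^3/12 + L i * d i^2) - ((2*c + L i)*(L i - c)^2/12 + L i * d i^2)
        = c^2/4 * L i + (c^3/12 - c^3/4) := fun i _ => by ring
    rw [Finset.sum_congr rfl hterm, Finset.sum_add_distrib, ← Finset.mul_sum, hsum,
      Finset.sum_const, Finset.card_range, nsmul_eq_mul, hc]
    field_simp
    ring
  have hEnn : ∀ i ∈ Finset.range n, 0 ≤ (2*c + L i)*(L i - c)^2/12 + L i * d i^2 := by
    intro i hi
    rw [Finset.mem_range] at hi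
    have h0 := hL i hi
    positivity
  have hE : 0 ≤ ∑ i ∈ Finset.range n, ((2*c + L i)*(L i - c)^2/12 + L i * d i^2) :=
    Finset.sum_nonneg hEnn
  have hmono : S^3/(12*(N:ℝ)^2) ≤ S^3/(12*(n:ℝ)^2) := by
    apply div_le_div_of_nonneg_left (by positivity) (by positivity)
    have : (n:ℝ) ≤ (N:ℝ) := by exact_mod_cast hnN
    nlinarith
  constructor
  · nlinarith [key, hE, hmono]
  · intro heq
    have hnN' : (n:ℝ) = N := by
      by_contra hne
      have hlt : (n:ℝ) < N := lt_of_le_of_ne (by exact_mod_cast hnN) hne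
      have : S^3/(12*(N:ℝ)^2) < S^3/(12*(n:ℝ)^2) := by
        apply div_lt_div_of_pos_left (by positivity) (by positivity)
        nlinarith
      nlinarith [key, hE]
    have hnNnat : n = N := by exact_mod_cast hnN'
    have hE0 : ∑ i ∈ Finset.range n, ((2*c + L i)*(L i - c)^2/12 + L i * d i^2) = 0 := by
      rw [hnN'] at key
      linarith [key, heq]
    have hz := (Finset.sum_eq_zero_iff_of_nonneg hEnn).mp hE0
    refine ⟨hnNnat, fun i hi => ?_⟩
    have hzi := hz i (Finset.mem_range.mpr hi)
    have h0 := hL i hi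
    have hA : 0 ≤ (2*c + L i)*(L i - c)^2/12 := by positivity
    have hB : 0 ≤ L i * d i^2 := by positivity
    have h1 : (2*c + L i)*(L i - c)^2/12 = 0 ∧ L i * d i^2 = 0 :=
      ⟨by linarith, by linarith⟩
    have hLc : L i = c := by
      rcases mul_eq_zero.mp (by linarith [h1.1] : (2*c + L i)*(L i - c)^2 = 0) with h | h
      · have : (0:ℝ) < 2*c + L i := by positivity
        exact absurd h this.ne'
      · exact sub_eq_zero.mp (sq_eq_zero_iff.mp h)
    have hcN : c = S / N := by rw [hc, hnN']
    refine ⟨hLc.trans hcN, ?_⟩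
    have : L i * d i^2 = 0 := h1.2
    rcases mul_eq_zero.mp this with h | h
    · rw [hLc] at h; exact absurd h hcpos.ne'
    · exact sq_eq_zero_iff.mp h

section Mid
variable {a b : ℝ} {N : ℕ}

lemma mid_strictMono (hab : a < b) (hN : 0 < N) :
    StrictMono (fun k : ℕ => a + (2 * (k : ℝ) + 1) * (b - a) / (2 * N)) := by
  intro k j hkj
  have hN' : (0:ℝ) < N := by exact_mod_cast hN
  have : (k:ℝ) < j := by exact_mod_cast hkj
  have hS : 0 < b - a := sub_pos.mpr hab
  simp only
  have e : ∀ m : ℕ, a + (2*(m:ℝ)+1)*(b-a)/(2*N) = a + (2*(m:ℝ)+1)*((b-a)/(2*N)) :=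
    fun m => by ring
  rw [e, e]
  have ht : 0 < (b-a)/(2*(N:ℝ)) := by positivity
  nlinarith

lemma card_mid (hab : a < b) (hN : 0 < N) :
    ((Finset.range N).image (fun k : ℕ => a + (2 * (k : ℝ) + 1) * (b - a) / (2 * N))).card = N := by
  rw [Finset.card_image_of_injective _ (mid_strictMono hab hN).injective, Finset.card_range]

lemma mid_infDist (hab : a < b) (hN : 0 < N) {k : ℕ} (hk : k < N) {x : ℝ}
    (hx : x ∈ Set.Icc (a + k*(b-a)/N) (a + (k+1)*(b-a)/N)) :
    infDist x (((Finset.range N).image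
        (fun k : ℕ => a + (2 * (k : ℝ) + 1) * (b - a) / (2 * N)) : Finset ℝ) : Set ℝ)
      = |x - (a + (2 * (k : ℝ) + 1) * (b - a) / (2 * N))| := by
  set Γ := (Finset.range N).image (fun k : ℕ => a + (2 * (k : ℝ) + 1) * (b - a) / (2 * N)) with hΓ
  have hN' : (0:ℝ) < N := by exact_mod_cast hN
  have hS : 0 < b - a := sub_pos.mpr hab
  have hmem : a + (2 * (k : ℝ) + 1) * (b - a) / (2 * N) ∈ Γ :=
    Finset.mem_image_of_mem _ (Finset.mem_range.mpr hk)
  have hnes : (Γ : Set ℝ).Nonempty := ⟨_, by exact_mod_cast hmem⟩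
  apply le_antisymm
  · rw [← Real.dist_eq]
    exact infDist_le_dist_of_mem (by exact_mod_cast hmem)
  · by_contra hcon
    push_neg at hcon
    obtain ⟨y, hy, hd⟩ := (infDist_lt_iff hnes).mp hcon
    rw [Real.dist_eq] at hd
    obtain ⟨j, hj, rfl⟩ : ∃ j < N, a + (2 * (j : ℝ) + 1) * (b - a) / (2 * N) = y := by
      rcases Finset.mem_image.mp (by exact_mod_cast hy) with ⟨j, hj, he⟩
      exact ⟨j, Finset.mem_range.mp hj, he⟩
    rcases lt_trichotomy j k with hjk | rfl | hkj
    · have hj' : (j:ℝ) + 1 ≤ k := by exact_mod_cast hjk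
      have h1 := hx.1
      refine absurd hd (not_lt.mpr (abs_sub_le_of_mid ?_ ?_))
      · exact (mid_strictMono hab hN hjk).le
      · have h1' : (k:ℝ)*(b-a) ≤ (x - a)*N := (div_le_iff₀ hN').mp (by linarith)
        have e : a + (2*(j:ℝ)+1)*(b-a)/(2*N) + (a + (2*(k:ℝ)+1)*(b-a)/(2*N))
            = 2*a + ((2*(j:ℝ)+1)+(2*(k:ℝ)+1))*(b-a)/(2*N) := by ring
        rw [e]
        have hnum : ((2*(j:ℝ)+1)+(2*(k:ℝ)+1))*(b-a) ≤ 2*(x-a)*(2*N) := by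
          nlinarith [mul_nonneg (by linarith : (0:ℝ) ≤ 2*(k:ℝ)-2*(j:ℝ)-2) hS.le]
        have h2' : ((2*(j:ℝ)+1)+(2*(k:ℝ)+1))*(b-a)/(2*N) ≤ 2*(x-a) := by
          rw [div_le_iff₀ (by positivity)]; linarith
        linarith
    · exact absurd hd (not_lt.mpr le_rfl)
    · have hj' : (k:ℝ) + 1 ≤ j := by exact_mod_cast hkj
      have h2 := hx.2
      refine absurd hd (not_lt.mpr (abs_sub_le_of_mid' ?_ ?_))
      · exact (mid_strictMono hab hN hkj).le
      · have h2'' : (x - a)*N ≤ ((k:ℝ)+1)*(b-a) := (le_div_iff₀ hN').mp (by linarith)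
        have e : a + (2*(k:ℝ)+1)*(b-a)/(2*N) + (a + (2*(j:ℝ)+1)*(b-a)/(2*N))
            = 2*a + ((2*(k:ℝ)+1)+(2*(j:ℝ)+1))*(b-a)/(2*N) := by ring
        rw [e]
        have hnum : 2*(x-a)*(2*N) ≤ ((2*(k:ℝ)+1)+(2*(j:ℝ)+1))*(b-a) := by
          nlinarith [mul_nonneg (by linarith : (0:ℝ) ≤ 2*(j:ℝ)-2*(k:ℝ)-2) hS.le]
        have h3' : 2*(x-a) ≤ ((2*(k:ℝ)+1)+(2*(j:ℝ)+1))*(b-a)/(2*N) := by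
          rw [le_div_iff₀ (by positivity)]; linarith
        linarith

lemma mid_integral (hab : a < b) (hN : 0 < N) :
    ∫ x in a..b, infDist x (((Finset.range N).image
        (fun k : ℕ => a + (2 * (k : ℝ) + 1) * (b - a) / (2 * N)) : Finset ℝ) : Set ℝ) ^ 2
      = (b-a)^3/(12*(N:ℝ)^2) := by
  set Γ := (Finset.range N).image (fun k : ℕ => a + (2 * (k : ℝ) + 1) * (b - a) / (2 * N)) with hΓ
  have hN' : (0:ℝ) < N := by exact_mod_cast hN
  have hS : 0 < b - a := sub_pos.mpr hab
  set c : ℕ → ℝ := fun k => a + k*(b-a)/N with hc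
  have hcont : Continuous (fun x : ℝ => infDist x (Γ : Set ℝ) ^ 2) :=
    (continuous_infDist_pt (Γ : Set ℝ)).pow 2
  have hsum := intervalIntegral.sum_integral_adjacent_intervals (a := c) (n := N)
    (f := fun x => infDist x (Γ : Set ℝ) ^ 2)
    (fun k _ => hcont.intervalIntegrable (μ := volume) _ _)
  have hc0 : c 0 = a := by simp [hc]
  have hcN : c N = b := by rw [hc]; field_simp; ring
  rw [hc0, hcN] at hsum
  rw [← hsum]
  have hstep : ∀ k ∈ Finset.range N,
      (∫ x in c k..c (k+1), infDist x (Γ : Set ℝ) ^ 2) = ((b-a)/N)^3/12 := by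
    intro k hk
    rw [Finset.mem_range] at hk
    have hle : c k ≤ c (k+1) := by
      rw [hc]; simp only; push_cast
      have h1 : (k:ℝ)*(b-a)/N ≤ ((k:ℝ)+1)*(b-a)/N := by
        gcongr
        linarith
      linarith
    have heq : Set.EqOn (fun x => infDist x (Γ : Set ℝ) ^ 2)
        (fun x => (x - (a + (2 * (k : ℝ) + 1) * (b - a) / (2 * N)))^2)
        (Set.uIcc (c k) (c (k+1))) := by
      intro x hx
      rw [Set.uIcc_of_le hle] at hx
      have hx' : x ∈ Set.Icc (a + (k:ℝ)*(b-a)/N) (a + ((k:ℝ)+1)*(b-a)/N) := by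
        rw [hc] at hx; push_cast at hx; exact hx
      show infDist x (Γ : Set ℝ) ^ 2 = _
      rw [hΓ, mid_infDist hab hN hk hx']
      exact sq_abs _
    rw [intervalIntegral.integral_congr heq, integral_sq_shift, hc]
    push_cast
    field_simp
    ring
  rw [Finset.sum_congr rfl hstep, Finset.sum_const, Finset.card_range, nsmul_eq_mul]
  field_simp

end Mid

/-- for the uniform distribution on `[a,b]`, the midpoint grid
`{a + (2k−1)(b−a)/(2N), k = 1,…,N}` is the unique optimal quadratic
`N`-quantizer, with error `(b−a)/(2N√3)`. -/
theorem uniform_optimal_quantizer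
    (a b : ℝ) (hab : a < b) (N : ℕ) (hN : 0 < N) :
    letI μ : Measure ℝ := (ENNReal.ofReal (b - a))⁻¹ • volume.restrict (Set.Icc a b)
    letI err : Finset ℝ → ℝ :=
      fun Γ => Real.sqrt (∫ x, Metric.infDist x (Γ : Set ℝ) ^ 2 ∂μ)
    letI Γmid : Finset ℝ :=
      (Finset.range N).image (fun k : ℕ => a + (2 * (k : ℝ) + 1) * (b - a) / (2 * N))
    err Γmid = (b - a) / (2 * N * Real.sqrt 3) ∧
      ∀ Γ : Finset ℝ, Γ.Nonempty → Γ.card ≤ N →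
        (b - a) / (2 * N * Real.sqrt 3) ≤ err Γ ∧
          (err Γ = (b - a) / (2 * N * Real.sqrt 3) → Γ = Γmid) := by
  beta_reduce
  set Γmid : Finset ℝ :=
    (Finset.range N).image (fun k : ℕ => a + (2 * (k : ℝ) + 1) * (b - a) / (2 * N)) with hΓmid
  have hS : 0 < b - a := sub_pos.mpr hab
  have hN' : (0:ℝ) < N := by exact_mod_cast hN
  have h3 : Real.sqrt 3 ^ 2 = 3 := Real.sq_sqrt (by norm_num)
  have h3' : (0:ℝ) < Real.sqrt 3 := Real.sqrt_pos.mpr (by norm_num)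
  set t : ℝ := (b - a) / (2 * N * Real.sqrt 3) with ht
  have htpos : 0 < t := div_pos hS (by positivity)
  have hkey : ∀ Γ : Finset ℝ,
      (∫ x, infDist x (Γ : Set ℝ) ^ 2
          ∂((ENNReal.ofReal (b - a))⁻¹ • volume.restrict (Set.Icc a b)))
        = (b-a)⁻¹ * ∫ x in a..b, infDist x (Γ : Set ℝ) ^ 2 := by
    intro Γ
    rw [integral_smul_measure, ENNReal.toReal_inv, ENNReal.toReal_ofReal hS.le,
      intervalIntegral.integral_of_le hab.le, smul_eq_mul]
    congr 1
    rw [← MeasureTheory.integral_Icc_eq_integral_Ioc]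
  have htsq : (b-a)⁻¹ * ((b-a)^3/(12*(N:ℝ)^2)) = t^2 := by
    rw [ht, div_pow, mul_pow, mul_pow, h3]
    field_simp
    ring
  have herrmid : Real.sqrt (∫ x, infDist x (Γmid : Set ℝ) ^ 2
      ∂((ENNReal.ofReal (b - a))⁻¹ • volume.restrict (Set.Icc a b))) = t := by
    rw [hkey, show (Γmid : Set ℝ) = (((Finset.range N).image
      (fun k : ℕ => a + (2 * (k : ℝ) + 1) * (b - a) / (2 * N)) : Finset ℝ) : Set ℝ) from rfl,
      mid_integral hab hN, htsq]
    exact Real.sqrt_sq htpos.le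
  refine ⟨herrmid, fun Γ hne hcard => ?_⟩
  set n := Γ.card with hn
  have hnpos : 0 < n := Finset.card_pos.mpr hne
  set L : ℕ → ℝ := fun i => cut a b Γ (i+1) - cut a b Γ i with hL
  set d : ℕ → ℝ := fun i => spt Γ i - (cut a b Γ i + cut a b Γ (i+1))/2 with hd
  have hLnn : ∀ i < n, 0 ≤ L i := fun i _ =>
    sub_nonneg.mpr (cut_mono hab.le Γ (Nat.le_succ i))
  have hLsum : ∑ i ∈ Finset.range n, L i = b - a := by
    rw [hL]
    simp only
    rw [Finset.sum_range_sub (f := cut a b Γ), cut_card hne, cut_zero]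
  have hdec := decomposition hab.le hne
  have hB := sumB hS hnpos hcard L d hLnn hLsum
  have hInn : 0 ≤ ∫ x in a..b, infDist x (Γ : Set ℝ) ^ 2 :=
    intervalIntegral.integral_nonneg hab.le (fun x _ => sq_nonneg _)
  have hlow : t ≤ Real.sqrt (∫ x, infDist x (Γ : Set ℝ) ^ 2
      ∂((ENNReal.ofReal (b - a))⁻¹ • volume.restrict (Set.Icc a b))) := by
    rw [hkey]
    have hIlow : (b-a)^3/(12*(N:ℝ)^2) ≤ ∫ x in a..b, infDist x (Γ : Set ℝ) ^ 2 := by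
      rw [hdec]; exact hB.1
    calc t = Real.sqrt (t^2) := (Real.sqrt_sq htpos.le).symm
    _ ≤ _ := by
      apply Real.sqrt_le_sqrt
      rw [← htsq]
      exact mul_le_mul_of_nonneg_left hIlow (inv_nonneg.mpr hS.le)
  refine ⟨hlow, fun heq => ?_⟩
  replace heq : Real.sqrt (∫ x, infDist x (Γ : Set ℝ) ^ 2
      ∂((ENNReal.ofReal (b - a))⁻¹ • volume.restrict (Set.Icc a b))) = t := heq
  have hIeq : ∫ x in a..b, infDist x (Γ : Set ℝ) ^ 2 = (b-a)^3/(12*(N:ℝ)^2) := by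
    have h1 : Real.sqrt ((b-a)⁻¹ * ∫ x in a..b, infDist x (Γ : Set ℝ) ^ 2) = t := by
      rw [← hkey]; exact heq
    have h2 : (b-a)⁻¹ * (∫ x in a..b, infDist x (Γ : Set ℝ) ^ 2) = t^2 := by
      rw [← Real.sq_sqrt (mul_nonneg (inv_nonneg.mpr hS.le) hInn), h1]
    rw [← htsq] at h2
    have := mul_left_cancel₀ (inv_ne_zero hS.ne') h2
    exact this
  rw [hdec] at hIeq
  obtain ⟨hnN, hvals⟩ := hB.2 hIeq
  have hcut : ∀ i ≤ n, cut a b Γ i = a + i*(b-a)/N := by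
    intro i
    induction i with
    | zero => intro _; rw [cut_zero]; simp
    | succ i ih =>
      intro hi
      have hLi := (hvals i (by omega)).1
      have : cut a b Γ (i+1) = cut a b Γ i + (b-a)/N := by
        have : L i = (b-a)/N := hLi
        rw [hL] at this
        simp only at this
        linarith
      rw [this, ih (by omega)]
      push_cast
      ring
  have hspt : ∀ i < n, spt Γ i = a + (2 * (i : ℝ) + 1) * (b - a) / (2 * N) := by
    intro i hi
    have hdi := (hvals i hi).2
    rw [hd] at hdi
    simp only at hdi
    have h1 : cut a b Γ i = a + i*(b-a)/N := hcut i hi.le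
    have h2 : cut a b Γ (i+1) = a + (i+1)*(b-a)/N := by
      rw [hcut (i+1) hi]; push_cast; ring
    have : spt Γ i = (cut a b Γ i + cut a b Γ (i+1))/2 := by linarith
    rw [this, h1, h2]
    field_simp
    ring
  have hsub : Γ ⊆ Γmid := by
    intro y hy
    obtain ⟨i, hi, rfl⟩ := spt_surj hy
    rw [hspt i hi]
    exact Finset.mem_image_of_mem _ (Finset.mem_range.mpr (by omega))
  exact Finset.eq_of_subset_of_card_le hsub (by rw [card_mid hab hN, ← hn, hnN])
end

section
/- Let W = Σ_{n≥1} √λ_n ξ_n e_n be the Karhunen–Loève expansion of Brownian motion (ξ_n i.i.d. standard normal), and for each n let ξ̂_n = q_n(ξ_n) where q_n is a stationary scalar quantization of the standard normal (i.e. E(ξ_n | ξ̂_n) = ξ̂_n), with q_n the constant 0 for n > m. Then the product quantizer Ŵ = Σ_{n=1}^m √λ_n ξ̂_n e_n is stationary: E(W | Ŵ) = Ŵ almost surely. -/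
open MeasureTheory ProbabilityTheory

section Aux

variable {Ω : Type*} {mΩ : MeasurableSpace Ω}

/-- If `k ∉ F`, a function of `ξ k` and the indicator of an event defined by the
`ξ n`, `n ∈ F`, are independent, so the integral of their product factorizes. -/
private lemma aux_indep_factor (μ : Measure Ω) [IsProbabilityMeasure μ]
    (ξ : ℕ → Ω → ℝ) (hξm : ∀ n, Measurable (ξ n))
    (hindep : iIndepFun ξ μ)
    (q : ℕ → ℝ → ℝ) (hqm : ∀ n, Measurable (q n)) (c' : ℕ → ℝ)
    (F : Finset ℕ) (k : ℕ) (hk : k ∉ F) (f : ℝ → ℝ) (hf : Measurable f) :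
    ∫ ω, f (ξ k ω) * Set.indicator (⋂ n ∈ F, {ω' | q n (ξ n ω') = c' n}) (fun _ => (1:ℝ)) ω ∂μ
      = (∫ ω, f (ξ k ω) ∂μ)
        * ∫ ω, Set.indicator (⋂ n ∈ F, {ω' | q n (ξ n ω') = c' n}) (fun _ => (1:ℝ)) ω ∂μ := by
  classical
  have hdis : Disjoint ({k} : Finset ℕ) F := by simp [Finset.disjoint_left, hk]
  have hIF := hindep.indepFun_finset {k} F hdis hξm
  set G : Set ({x // x ∈ F} → ℝ) := {h | ∀ i : {x // x ∈ F}, q i (h i) = c' i} with hG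
  have hGmeas : MeasurableSet G := by
    have : G = ⋂ i : {x // x ∈ F}, (fun h : {x // x ∈ F} → ℝ => q i (h i)) ⁻¹' {c' i} := by
      ext h; simp [hG]
    rw [this]
    exact MeasurableSet.iInter fun i =>
      ((hqm i).comp (measurable_pi_apply i)) (measurableSet_singleton _)
  set φ : ({x // x ∈ ({k} : Finset ℕ)} → ℝ) → ℝ :=
    fun h => f (h ⟨k, Finset.mem_singleton_self k⟩) with hφdef
  set ψ : ({x // x ∈ F} → ℝ) → ℝ := G.indicator (fun _ => (1:ℝ)) with hψdef
  have hφ : Measurable φ := hf.comp (measurable_pi_apply _)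
  have hψ : Measurable ψ := measurable_const.indicator hGmeas
  have hcomp := hIF.comp hφ hψ
  have hleft : (φ ∘ fun ω (i : {x // x ∈ ({k} : Finset ℕ)}) => ξ i ω) = fun ω => f (ξ k ω) := rfl
  have hright : (ψ ∘ fun ω (i : {x // x ∈ F}) => ξ i ω)
      = Set.indicator (⋂ n ∈ F, {ω' | q n (ξ n ω') = c' n}) (fun _ => (1:ℝ)) := by
    funext ω
    simp only [Function.comp_apply, hψdef, Set.indicator_apply]
    refine if_congr ?_ rfl rfl
    simp only [hG, Set.mem_setOf_eq, Set.mem_iInter]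
    exact ⟨fun h n hn => h ⟨n, hn⟩, fun h i => h i i.2⟩
  rw [hleft, hright] at hcomp
  have := hcomp.integral_mul_eq_mul_integral (hf.comp (hξm k)).aestronglyMeasurable
    (by
      refine Measurable.aestronglyMeasurable ?_
      refine measurable_const.indicator ?_
      exact MeasurableSet.biInter (Set.to_countable _)
        (fun n _ => ((hqm n).comp (hξm n)) (measurableSet_singleton _)))
  simpa [Pi.mul_apply] using this

end Aux

/-- a product quantizer of Brownian motion built on its K–L
expansion `W = Σ √λ_n ξ_n e_n` from stationary scalar quantizations
`ξ̂_n = q_n(ξ_n)` (with `q_n = 0` for `n ≥ m`) is stationary: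
`E(W | Ŵ) = Ŵ` a.s. -/
theorem product_quantizer_stationary
    {H Ω : Type*} [NormedAddCommGroup H] [InnerProductSpace ℝ H]
    [TopologicalSpace.SeparableSpace H] [CompleteSpace H]
    [MeasurableSpace H] [BorelSpace H]
    {mΩ : MeasurableSpace Ω} (μ : Measure Ω) [IsProbabilityMeasure μ]
    (e : ℕ → H) (hon : Orthonormal ℝ e)
    (lam : ℕ → ℝ) (hlam : ∀ n, 0 < lam n)
    (ξ : ℕ → Ω → ℝ) (hξm : ∀ n, Measurable (ξ n))
    (hindep : iIndepFun ξ μ)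
    (hgauss : ∀ n, μ.map (ξ n) = gaussianReal 0 1)
    (W : Ω → H) (hWm : Measurable W) (hWint : Integrable W μ)
    -- K–L expansion of `W`
    (hW : ∀ ω, HasSum (fun n => (Real.sqrt (lam n) * ξ n ω) • e n) (W ω))
    (m : ℕ) (q : ℕ → ℝ → ℝ) (hqm : ∀ n, Measurable (q n))
    (hqfin : ∀ n, (Set.range (q n)).Finite)
    (hqzero : ∀ n, m ≤ n → q n = fun _ => 0)
    -- each scalar quantization is stationary: `E(ξ_n | ξ̂_n) = ξ̂_n`
    (hstat : ∀ n,
      μ[ξ n | MeasurableSpace.comap (fun ω => q n (ξ n ω)) inferInstance]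
        =ᵐ[μ] fun ω => q n (ξ n ω))
    (What : Ω → H)
    (hWhat : ∀ ω, What ω =
      ∑ n ∈ Finset.range m, (Real.sqrt (lam n) * q n (ξ n ω)) • e n) :
    μ[W | MeasurableSpace.comap What inferInstance] =ᵐ[μ] What := by
  classical
  haveI : SecondCountableTopology H := UniformSpace.secondCountable_of_separable H
  -- basic objects
  set K : Submodule ℝ H := (Submodule.span ℝ (Set.range e)).topologicalClosure with hKdef
  haveI : CompleteSpace K := (Submodule.isClosed_topologicalClosure _).completeSpace_coe
  -- coefficients of W
  have hcoef : ∀ k ω, (inner ℝ (e k) (W ω) : ℝ) = Real.sqrt (lam k) * ξ k ω := by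
    intro k ω
    have h1 : HasSum (fun n => (inner ℝ (e k) ((Real.sqrt (lam n) * ξ n ω) • e n) : ℝ))
        (inner ℝ (e k) (W ω)) := (hW ω).mapL (innerSL ℝ (e k))
    have h2 : (fun n => (inner ℝ (e k) ((Real.sqrt (lam n) * ξ n ω) • e n) : ℝ))
        = fun n => if n = k then Real.sqrt (lam k) * ξ k ω else 0 := by
      funext n
      rw [real_inner_smul_right, orthonormal_iff_ite.mp hon k n]
      rcases eq_or_ne n k with rfl | hne
      · simp
      · simp [hne, Ne.symm hne]
    rw [h2] at h1
    exact h1.unique (hasSum_ite_eq k _)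
  -- membership of W in the closed span
  have hWK : ∀ ω, W ω ∈ K := by
    intro ω
    have hsp : ∀ s : Finset ℕ,
        ∑ n ∈ s, (Real.sqrt (lam n) * ξ n ω) • e n ∈ Submodule.span ℝ (Set.range e) :=
      fun s => Submodule.sum_mem _ fun n _ =>
        Submodule.smul_mem _ _ (Submodule.subset_span ⟨n, rfl⟩)
    have hcl : W ω ∈ closure ((Submodule.span ℝ (Set.range e) : Submodule ℝ H) : Set H) :=
      mem_closure_of_tendsto (hW ω) (Filter.Eventually.of_forall hsp)
    change W ω ∈ (Submodule.span ℝ (Set.range e)).topologicalClosure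
    rw [← SetLike.mem_coe, Submodule.topologicalClosure_coe]
    exact hcl
  -- an element of the closed span orthogonal to all `e k` vanishes
  have hunique : ∀ x : H, x ∈ K → (∀ k, (inner ℝ (e k) x : ℝ) = 0) → x = 0 := by
    intro x hxK hx
    have hsp : ∀ y ∈ Submodule.span ℝ (Set.range e), (inner ℝ x y : ℝ) = 0 := by
      intro y hy
      induction hy using Submodule.span_induction with
      | mem y hy => obtain ⟨k, rfl⟩ := hy; rw [real_inner_comm]; exact hx k
      | zero => simp
      | add y z _ _ hy hz => rw [inner_add_right, hy, hz, add_zero]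
      | smul r y _ hy => rw [real_inner_smul_right, hy, mul_zero]
    have hclosed : IsClosed {y : H | (inner ℝ x y : ℝ) = 0} :=
      isClosed_eq (Continuous.inner continuous_const continuous_id) continuous_const
    have hsub : closure ((Submodule.span ℝ (Set.range e) : Submodule ℝ H) : Set H)
        ⊆ {y : H | (inner ℝ x y : ℝ) = 0} := closure_minimal hsp hclosed
    have hxc : x ∈ closure ((Submodule.span ℝ (Set.range e) : Submodule ℝ H) : Set H) := by
      rw [← Submodule.topologicalClosure_coe]
      exact hxK
    have : (inner ℝ x x : ℝ) = 0 := hsub hxc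
    exact inner_self_eq_zero.mp this
  -- integrability of the ξ's
  have hsqrt : ∀ n, Real.sqrt (lam n) ≠ 0 := fun n => ne_of_gt (Real.sqrt_pos.2 (hlam n))
  have hξint : ∀ k, Integrable (ξ k) μ := by
    intro k
    have h1 : Integrable (fun ω => (inner ℝ (e k) (W ω) : ℝ)) μ := hWint.const_inner (e k)
    have h2 : (fun ω => (inner ℝ (e k) (W ω) : ℝ)) = fun ω => Real.sqrt (lam k) * ξ k ω := by
      funext ω; exact hcoef k ω
    rw [h2] at h1
    have h3 := h1.const_mul (Real.sqrt (lam k))⁻¹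
    have h4 : (fun ω => (Real.sqrt (lam k))⁻¹ * (Real.sqrt (lam k) * ξ k ω)) = ξ k := by
      funext ω; rw [← mul_assoc, inv_mul_cancel₀ (hsqrt k), one_mul]
    rwa [h4] at h3
  -- the ξ's with index ≥ m are centered
  have hmean0 : ∀ k, m ≤ k → ∫ ω, ξ k ω ∂μ = 0 := by
    intro k hk
    have h := hstat k
    simp only [hqzero k hk] at h
    rw [MeasurableSpace.comap_const, condExp_bot] at h
    haveI : Filter.NeBot (ae μ) := ae_neBot.mpr (IsProbabilityMeasure.ne_zero μ)
    obtain ⟨ω, hω⟩ := h.exists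
    exact hω
  -- boundedness and integrability of the quantized coordinates
  have hqint : ∀ n, Integrable (fun ω => q n (ξ n ω)) μ := by
    intro n
    obtain ⟨C, hC⟩ := ((hqfin n).image abs).bddAbove
    refine Integrable.mono' (integrable_const C)
      ((hqm n).comp (hξm n)).aestronglyMeasurable (Filter.Eventually.of_forall fun ω => ?_)
    rw [Real.norm_eq_abs]
    exact hC ⟨q n (ξ n ω), ⟨ξ n ω, rfl⟩, rfl⟩
  have hWhatInt : Integrable What μ := by
    have : Integrable (fun ω => ∑ n ∈ Finset.range m,
        (Real.sqrt (lam n) * q n (ξ n ω)) • e n) μ :=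
      integrable_finset_sum _ fun n _ => ((hqint n).const_mul _).smul_const (e n)
    exact this.congr (Filter.Eventually.of_forall fun ω => (hWhat ω).symm)
  -- the quantizer map
  set Y : Ω → (Fin m → ℝ) := fun ω i => q i (ξ i ω) with hYdef
  have hYm : Measurable Y := measurable_pi_lambda _ fun i => (hqm i).comp (hξm i)
  set gfun : (Fin m → ℝ) → H := fun v => ∑ i : Fin m, (Real.sqrt (lam i) * v i) • e i with hgdef
  have hgm : Measurable gfun := by
    refine Finset.measurable_sum _ fun i _ => ?_
    exact ((measurable_pi_apply i).const_mul _).smul_const (e i)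
  have hWY : What = gfun ∘ Y := by
    funext ω
    rw [hWhat ω, Function.comp_apply, hgdef]
    exact (Fin.sum_univ_eq_sum_range (fun n => (Real.sqrt (lam n) * q n (ξ n ω)) • e n) m).symm
  have hWhatm : Measurable What := by rw [hWY]; exact hgm.comp hYm
  have hm : MeasurableSpace.comap What inferInstance ≤ mΩ := measurable_iff_comap_le.mp hWhatm
  have hGle : MeasurableSpace.comap What inferInstance
      ≤ MeasurableSpace.comap Y inferInstance := by
    rw [hWY, ← MeasurableSpace.comap_comp]
    exact MeasurableSpace.comap_mono (measurable_iff_comap_le.mp hgm)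
  -- finite range of Y
  have hYfin : (Set.range Y).Finite := by
    refine Set.Finite.subset (Set.Finite.pi' (fun i : Fin m => hqfin i)) ?_
    rintro _ ⟨ω, rfl⟩
    exact fun i => ⟨ξ i ω, rfl⟩
  -- the per-atom scalar integrals
  -- the atom sets, measurability
  have hBm : ∀ (c' : ℕ → ℝ) (n : ℕ), MeasurableSet {ω' | q n (ξ n ω') = c' n} := by
    intro c' n
    exact ((hqm n).comp (hξm n)) (measurableSet_singleton (c' n))
  have hscalar : ∀ (c' : ℕ → ℝ), (∀ n, m ≤ n → c' n = 0) → ∀ k,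
      ∫ ω in ⋂ n ∈ Finset.range m, {ω' | q n (ξ n ω') = c' n}, ξ k ω ∂μ
        = c' k * (μ (⋂ n ∈ Finset.range m, {ω' | q n (ξ n ω') = c' n})).toReal := by
    intro c' hc'0 k
    set S : Set Ω := ⋂ n ∈ Finset.range m, {ω' | q n (ξ n ω') = c' n} with hSdef
    have hSm : MeasurableSet S := by
      rw [hSdef]
      exact MeasurableSet.biInter (Set.to_countable _) (fun n _ => hBm c' n)
    by_cases hkm : k < m
    · -- k < m : use stationarity of the scalar quantizer and independence
      have hkmem : k ∈ Finset.range m := Finset.mem_range.mpr hkm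
      have hSAt : S = {ω' | q k (ξ k ω') = c' k}
          ∩ ⋂ n ∈ (Finset.range m).erase k, {ω' | q n (ξ n ω') = c' n} := by
        rw [hSdef]
        conv_lhs => rw [show Finset.range m = insert k ((Finset.range m).erase k) from
          (Finset.insert_erase hkmem).symm]
        rw [Finset.set_biInter_insert]
      set A : Set Ω := {ω' | q k (ξ k ω') = c' k} with hAdef
      set t : Set Ω := ⋂ n ∈ (Finset.range m).erase k, {ω' | q n (ξ n ω') = c' n} with htdef
      have hAm : MeasurableSet A := hBm c' k
      have htm : MeasurableSet t := by
        rw [htdef]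
        exact MeasurableSet.biInter (Set.to_countable _) (fun n _ => hBm c' n)
      have haux0 := aux_indep_factor μ ξ hξm hindep q hqm c' ((Finset.range m).erase k) k
        (Finset.notMem_erase k _)
        (fun x => x * Set.indicator ((q k) ⁻¹' {c' k}) (fun _ => (1:ℝ)) x)
        (measurable_id.mul (measurable_const.indicator ((hqm k) (measurableSet_singleton _))))
      have haux1 := aux_indep_factor μ ξ hξm hindep q hqm c' ((Finset.range m).erase k) k
        (Finset.notMem_erase k _)
        (Set.indicator ((q k) ⁻¹' {c' k}) (fun _ => (1:ℝ)))
        (measurable_const.indicator ((hqm k) (measurableSet_singleton _)))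
      have hmem : ∀ ω, (ξ k ω ∈ (q k) ⁻¹' {c' k}) ↔ ω ∈ A := fun ω => Iff.rfl
      have hmemS : ∀ ω, (ω ∈ S) ↔ (ω ∈ A ∧ ω ∈ t) := by
        intro ω
        rw [hSAt]
        exact Set.mem_inter_iff ω A t
      have hind : ∀ ω, Set.indicator S (ξ k) ω
          = (ξ k ω * Set.indicator ((q k) ⁻¹' {c' k}) (fun _ => (1:ℝ)) (ξ k ω))
            * Set.indicator t (fun _ => (1:ℝ)) ω := by
        intro ω
        simp only [Set.indicator_apply, hmem ω, hmemS ω]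
        rcases em (ω ∈ A) with h1 | h1 <;> rcases em (ω ∈ t) with h2 | h2 <;>
          simp [h1, h2]
      have hind1 : ∀ ω, Set.indicator S (fun _ => (1:ℝ)) ω
          = Set.indicator ((q k) ⁻¹' {c' k}) (fun _ => (1:ℝ)) (ξ k ω)
            * Set.indicator t (fun _ => (1:ℝ)) ω := by
        intro ω
        simp only [Set.indicator_apply, hmem ω, hmemS ω]
        rcases em (ω ∈ A) with h1 | h1 <;> rcases em (ω ∈ t) with h2 | h2 <;>
          simp [h1, h2]
      have hf₀A : (fun ω => ξ k ω * Set.indicator ((q k) ⁻¹' {c' k}) (fun _ => (1:ℝ)) (ξ k ω))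
          = Set.indicator A (ξ k) := by
        funext ω
        simp only [Set.indicator_apply, hmem ω]
        rcases em (ω ∈ A) with h1 | h1 <;> simp [h1]
      have hf₁A : (fun ω => Set.indicator ((q k) ⁻¹' {c' k}) (fun _ => (1:ℝ)) (ξ k ω))
          = Set.indicator A (fun _ => (1:ℝ)) := by
        funext ω
        simp only [Set.indicator_apply, hmem ω]
      -- the conditional expectation step
      have hf₀int : ∫ ω, ξ k ω * Set.indicator ((q k) ⁻¹' {c' k}) (fun _ => (1:ℝ)) (ξ k ω) ∂μ
          = c' k * (μ A).toReal := by
        rw [hf₀A, integral_indicator hAm]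
        have hmk : MeasurableSpace.comap (fun ω => q k (ξ k ω)) inferInstance ≤ mΩ :=
          measurable_iff_comap_le.mp ((hqm k).comp (hξm k))
        have hAmk : MeasurableSet[MeasurableSpace.comap (fun ω => q k (ξ k ω)) inferInstance] A :=
          ⟨{c' k}, measurableSet_singleton _, rfl⟩
        have e1 : ∫ ω in A, ξ k ω ∂μ
            = ∫ ω in A, (μ[ξ k | MeasurableSpace.comap (fun ω => q k (ξ k ω)) inferInstance]) ω ∂μ :=
          (setIntegral_condExp hmk (hξint k) hAmk).symm
        have e2 : ∫ ω in A, (μ[ξ k | MeasurableSpace.comap (fun ω => q k (ξ k ω)) inferInstance]) ω ∂μ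
            = ∫ ω in A, q k (ξ k ω) ∂μ :=
          integral_congr_ae (ae_restrict_of_ae (hstat k))
        have e3 : ∫ ω in A, q k (ξ k ω) ∂μ = c' k * (μ A).toReal := by
          rw [setIntegral_congr_fun (g := fun _ => c' k) hAm (fun ω hω => hω),
            setIntegral_const, smul_eq_mul, mul_comm]
          rfl
        exact e1.trans (e2.trans e3)
      have hf₁int : ∫ ω, Set.indicator ((q k) ⁻¹' {c' k}) (fun _ => (1:ℝ)) (ξ k ω) ∂μ
          = (μ A).toReal := by
        rw [hf₁A, integral_indicator hAm]
        simp
        rfl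
      have htint : ∫ ω, Set.indicator t (fun _ => (1:ℝ)) ω ∂μ = (μ t).toReal := by
        rw [integral_indicator htm]
        simp
        rfl
      have hmuS : (μ S).toReal = (μ A).toReal * (μ t).toReal := by
        have h1 : ∫ ω, Set.indicator S (fun _ => (1:ℝ)) ω ∂μ = (μ S).toReal := by
          rw [integral_indicator hSm]
          simp
          rfl
        have h2 : ∫ ω, Set.indicator S (fun _ => (1:ℝ)) ω ∂μ
            = (∫ ω, Set.indicator ((q k) ⁻¹' {c' k}) (fun _ => (1:ℝ)) (ξ k ω) ∂μ)
              * ∫ ω, Set.indicator t (fun _ => (1:ℝ)) ω ∂μ :=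
          (integral_congr_ae (Filter.Eventually.of_forall hind1)).trans haux1
        rw [← h1, h2, hf₁int, htint]
      have hL : ∫ ω in S, ξ k ω ∂μ
          = (∫ ω, ξ k ω * Set.indicator ((q k) ⁻¹' {c' k}) (fun _ => (1:ℝ)) (ξ k ω) ∂μ)
            * ∫ ω, Set.indicator t (fun _ => (1:ℝ)) ω ∂μ :=
        (integral_indicator hSm).symm.trans
          ((integral_congr_ae (Filter.Eventually.of_forall hind)).trans haux0)
      rw [hL, hf₀int, htint, hmuS]
      ring
    · -- k ≥ m : ξ k is centered and independent of the event
      have hk : k ∉ Finset.range m := by simp [Finset.mem_range, not_lt.1 hkm]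
      have haux := aux_indep_factor μ ξ hξm hindep q hqm c' (Finset.range m) k hk
        id measurable_id
      rw [← hSdef] at haux
      simp only [id_eq] at haux
      have hind : ∀ ω, Set.indicator S (ξ k) ω
          = ξ k ω * Set.indicator S (fun _ => (1:ℝ)) ω := by
        intro ω
        simp only [Set.indicator_apply]
        rcases em (ω ∈ S) with h | h <;> simp [h]
      have h1 : ∫ ω in S, ξ k ω ∂μ
          = (∫ ω, ξ k ω ∂μ) * ∫ ω, Set.indicator S (fun _ => (1:ℝ)) ω ∂μ :=
        (integral_indicator hSm).symm.trans
          ((integral_congr_ae (Filter.Eventually.of_forall hind)).trans haux)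
      rw [h1, hmean0 k (not_lt.1 hkm), zero_mul, hc'0 k (not_lt.1 hkm), zero_mul]
  -- per-atom vector integral of W
  have hW_atom : ∀ v : Fin m → ℝ,
      ∫ ω in Y ⁻¹' {v}, W ω ∂μ = (μ (Y ⁻¹' {v})).toReal • gfun v := by
    intro v
    set c' : ℕ → ℝ := fun n => if h : n < m then v ⟨n, h⟩ else 0 with hc'def
    have hc'0 : ∀ n, m ≤ n → c' n = 0 := fun n hn => dif_neg (not_lt.2 hn)
    set S : Set Ω := ⋂ n ∈ Finset.range m, {ω' | q n (ξ n ω') = c' n} with hSdef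
    have hSrep : Y ⁻¹' {v} = S := by
      ext ω
      simp only [Set.mem_preimage, Set.mem_singleton_iff, hSdef, Set.mem_iInter,
        Finset.mem_range, Set.mem_setOf_eq, funext_iff]
      constructor
      · intro h n hn
        have := h ⟨n, hn⟩
        simp only [hYdef] at this
        rw [hc'def]
        simp only [dif_pos hn]
        exact this
      · intro h i
        have := h i i.2
        rw [hc'def] at this
        simp only [dif_pos i.2] at this
        simpa [hYdef] using this
    have hSm : MeasurableSet S := by
      rw [hSdef]
      exact MeasurableSet.biInter (Set.to_countable _) (fun n _ => hBm c' n)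
    have hscal := hscalar c' hc'0
    have hgv : gfun v = ∑ n ∈ Finset.range m, (Real.sqrt (lam n) * c' n) • e n := by
      rw [hgdef, ← Fin.sum_univ_eq_sum_range (fun n => (Real.sqrt (lam n) * c' n) • e n) m]
      refine Finset.sum_congr rfl fun i _ => ?_
      rw [hc'def]
      simp only [dif_pos i.2, Fin.eta]
    rw [hSrep]
    have hIntOn : IntegrableOn W S μ := hWint.integrableOn
    set IW : H := ∫ ω in S, W ω ∂μ with hIWdef
    have hIWK : IW ∈ K := by
      set P := K.orthogonalProjectionOnto with hPdef
      set L : H →L[ℝ] H := K.subtypeL.comp P with hLdef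
      have hLid : ∀ x ∈ K, L x = x := fun x hx => (Submodule.starProjection_eq_self_iff (K := K)).mpr hx
      have h1 : L IW = ∫ ω in S, L (W ω) ∂μ := (L.integral_comp_comm hIntOn).symm
      have h2 : ∫ ω in S, L (W ω) ∂μ = IW := by
        rw [hIWdef]
        exact integral_congr_ae (Filter.Eventually.of_forall fun ω => hLid _ (hWK ω))
      rw [← h1.trans h2, hLdef]
      exact Submodule.coe_mem (P IW)
    have hgvK : gfun v ∈ K := by
      apply Submodule.le_topologicalClosure
      rw [hgdef]
      exact Submodule.sum_mem _ fun i _ =>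
        Submodule.smul_mem _ _ (Submodule.subset_span ⟨i, rfl⟩)
    have hDzero : IW - (μ S).toReal • gfun v = 0 := by
      refine hunique _ (Submodule.sub_mem _ hIWK (Submodule.smul_mem _ _ hgvK)) ?_
      intro k
      have h1 : (inner ℝ (e k) IW : ℝ) = ∫ ω in S, (inner ℝ (e k) (W ω) : ℝ) ∂μ :=
        (integral_inner hIntOn (e k)).symm
      have h2 : ∫ ω in S, (inner ℝ (e k) (W ω) : ℝ) ∂μ
          = Real.sqrt (lam k) * (c' k * (μ S).toReal) := by
        simp_rw [hcoef]
        rw [integral_const_mul, hscal k]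
      have h3 : (inner ℝ (e k) (gfun v) : ℝ) = if k < m then Real.sqrt (lam k) * c' k else 0 := by
        rw [hgv, inner_sum]
        have hterm : ∀ n ∈ Finset.range m,
            (inner ℝ (e k) ((Real.sqrt (lam n) * c' n) • e n) : ℝ)
              = if k = n then Real.sqrt (lam n) * c' n else 0 := by
          intro n _
          rw [real_inner_smul_right, orthonormal_iff_ite.mp hon k n]
          by_cases h : k = n <;> simp [h]
        rw [Finset.sum_congr rfl hterm, Finset.sum_ite_eq]
        simp [Finset.mem_range]
      rw [inner_sub_right, real_inner_smul_right, h1, h2, h3]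
      by_cases hkm : k < m
      · rw [if_pos hkm]; ring
      · rw [if_neg hkm, hc'0 k (not_lt.1 hkm)]; ring
    exact sub_eq_zero.mp hDzero
  -- per-atom vector integral of What
  have hWhat_atom : ∀ v : Fin m → ℝ,
      ∫ ω in Y ⁻¹' {v}, What ω ∂μ = (μ (Y ⁻¹' {v})).toReal • gfun v := by
    intro v
    have hSm : MeasurableSet (Y ⁻¹' {v}) := hYm (measurableSet_singleton v)
    have : ∀ ω ∈ Y ⁻¹' {v}, What ω = gfun v := by
      intro ω hω
      have : Y ω = v := hω
      rw [hWY, Function.comp_apply, this]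
    rw [setIntegral_congr_fun hSm this, setIntegral_const]
    rfl
  -- conclusion via the characterization of conditional expectation
  refine (ae_eq_condExp_of_forall_setIntegral_eq hm hWint
    (fun s _ _ => hWhatInt.integrableOn)
    (fun s hs _ => ?_)
    ((measurable_iff_comap_le.mpr le_rfl).stronglyMeasurable.aestronglyMeasurable)).symm
  -- s is comap-Y-measurable
  obtain ⟨B, hB, rfl⟩ := MeasurableSpace.measurableSet_comap.mp (hGle s hs)
  set T : Finset (Fin m → ℝ) := hYfin.toFinset.filter (· ∈ B) with hTdef
  have hsplit : Y ⁻¹' B = ⋃ v ∈ T, Y ⁻¹' {v} := by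
    ext ω
    simp only [Set.mem_preimage, Set.mem_iUnion, hTdef, Finset.mem_filter,
      Set.Finite.mem_toFinset, Set.mem_singleton_iff, exists_prop]
    constructor
    · intro h
      exact ⟨Y ω, ⟨⟨⟨ω, rfl⟩, h⟩, rfl⟩⟩
    · rintro ⟨v, ⟨_, hvB⟩, rfl⟩
      exact hvB
  have hmeasv : ∀ v ∈ T, MeasurableSet (Y ⁻¹' {v}) :=
    fun v _ => hYm (measurableSet_singleton v)
  have hdisj : Set.Pairwise (↑T) (Function.onFun Disjoint fun v => Y ⁻¹' {v}) := by
    intro a _ b _ hab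
    simp only [Function.onFun]
    refine Set.disjoint_left.mpr ?_
    intro ω ha' hb'
    exact hab ((Set.mem_singleton_iff.mp ha').symm.trans (Set.mem_singleton_iff.mp hb'))
  rw [hsplit,
    integral_biUnion_finset T hmeasv hdisj (fun v _ => hWhatInt.integrableOn),
    integral_biUnion_finset T hmeasv hdisj (fun v _ => hWint.integrableOn)]
  exact Finset.sum_congr rfl fun v _ => (hWhat_atom v).trans (hW_atom v).symm
end

section
/- Let (x₁,…,x_N) ∈ ([0,1]^d)^N and let U be uniformly distributed on [0,1]^d. Assume the Proinov inequality: for every continuous f : [0,1]^d → ℝ, |∫_{[0,1]^d} f dλ_d − (1/N) Σ_k f(x_k)| ≤ K_d ω_f(D^{1/d}) where D = Disc*_N(x₁,…,x_N) is the star discrepancy and ω_f is the ℓ∞ modulus of continuity. Then the L¹ quantization error of U with respect to the ℓ∞-norm by the grid {x₁,…,x_N} satisfies E[min_{1≤k≤N} |U − x_k|_∞] ≤ K_d · Disc*_N(x₁,…,x_N)^{1/d}. -/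
open MeasureTheory

/-- from Proinov's inequality, the `L¹` quantization error of the
uniform distribution on `[0,1]^d` (for the `ℓ∞`-norm, which is the sup-norm on
`Fin d → ℝ`) by the grid `{x₁,…,x_N}` is bounded by `K_d · (Disc*_N)^{1/d}`. -/
theorem quantization_error_le_discrepancy
    (d N : ℕ) (hd : 0 < d) (hN : 0 < N) (K : ℝ) (hK : 0 ≤ K)
    (x : Fin N → (Fin d → ℝ))
    (hx : ∀ k, ∀ i, x k i ∈ Set.Icc (0 : ℝ) 1)
    (D : ℝ)
    -- `D` is the star discrepancy of `(x₁,…,x_N)`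
    (hD : D = sSup {r : ℝ | ∃ y : Fin d → ℝ, (∀ i, y i ∈ Set.Icc (0 : ℝ) 1) ∧
      r = |(((Finset.univ.filter (fun k : Fin N => ∀ i, x k i ≤ y i)).card : ℝ) / N)
            - ∏ i, y i|})
    -- Proinov's inequality for this grid, with `ω_f` the `ℓ∞` modulus of continuity
    (hProinov : ∀ f : (Fin d → ℝ) → ℝ,
      ContinuousOn f {ξ | ∀ i, ξ i ∈ Set.Icc (0 : ℝ) 1} →
      |(∫ ξ in {ξ : Fin d → ℝ | ∀ i, ξ i ∈ Set.Icc (0 : ℝ) 1}, f ξ)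
          - (∑ k : Fin N, f (x k)) / N|
        ≤ K * sSup {r : ℝ | ∃ u, (∀ i, u i ∈ Set.Icc (0 : ℝ) 1) ∧
            ∃ v, (∀ i, v i ∈ Set.Icc (0 : ℝ) 1) ∧
              ‖u - v‖ ≤ D ^ ((1 : ℝ) / d) ∧ r = |f u - f v|}) :
    (∫ ξ in {ξ : Fin d → ℝ | ∀ i, ξ i ∈ Set.Icc (0 : ℝ) 1},
        ⨅ k : Fin N, ‖ξ - x k‖)
      ≤ K * D ^ ((1 : ℝ) / d) := by
  haveI : Nonempty (Fin N) := ⟨⟨0, hN⟩⟩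
  set f : (Fin d → ℝ) → ℝ := fun ξ => ⨅ k : Fin N, ‖ξ - x k‖ with hf
  have hbdd : ∀ u : Fin d → ℝ, BddBelow (Set.range fun k : Fin N => ‖u - x k‖) := by
    intro u
    exact ⟨0, by rintro r ⟨k, rfl⟩; exact norm_nonneg _⟩
  -- f is 1-Lipschitz
  have hkey : ∀ u v : Fin d → ℝ, f u ≤ f v + ‖u - v‖ := by
    intro u v
    have h : f u - ‖u - v‖ ≤ f v := by
      refine le_ciInf fun k => ?_
      have h1 : f u ≤ ‖u - x k‖ := ciInf_le (hbdd u) k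
      have h2 : ‖u - x k‖ ≤ ‖u - v‖ + ‖v - x k‖ := by
        have := norm_add_le (u - v) (v - x k)
        simpa [sub_add_sub_cancel] using this
      linarith
    linarith
  have hlip : ∀ u v : Fin d → ℝ, |f u - f v| ≤ ‖u - v‖ := by
    intro u v
    rw [abs_sub_le_iff]
    constructor
    · have := hkey u v; linarith
    · have := hkey v u
      rw [norm_sub_rev] at this
      linarith
  have hcont : ContinuousOn f {ξ : Fin d → ℝ | ∀ i, ξ i ∈ Set.Icc (0 : ℝ) 1} := by
    have : LipschitzWith 1 f := by
      refine LipschitzWith.of_dist_le_mul fun u v => ?_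
      simpa [Real.dist_eq, dist_eq_norm] using hlip u v
    exact this.continuous.continuousOn
  have hfx : ∀ k, f (x k) = 0 := fun k =>
    le_antisymm ((ciInf_le (hbdd _) k).trans (by simp)) (le_ciInf fun j => norm_nonneg _)
  -- D is nonnegative
  have hD0 : 0 ≤ D := by
    rw [hD]
    have hmem : (0 : ℝ) ∈ {r : ℝ | ∃ y : Fin d → ℝ, (∀ i, y i ∈ Set.Icc (0 : ℝ) 1) ∧
        r = |(((Finset.univ.filter (fun k : Fin N => ∀ i, x k i ≤ y i)).card : ℝ) / N)
              - ∏ i, y i|} := by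
      refine ⟨fun _ => 1, fun i => by norm_num, ?_⟩
      have : (Finset.univ.filter (fun k : Fin N => ∀ i, x k i ≤ (1 : ℝ))) = Finset.univ := by
        refine Finset.filter_true_of_mem fun k _ => fun i => (hx k i).2
      rw [this]
      simp [Finset.card_univ, div_self (by positivity : (N : ℝ) ≠ 0)]
    have hub : BddAbove {r : ℝ | ∃ y : Fin d → ℝ, (∀ i, y i ∈ Set.Icc (0 : ℝ) 1) ∧
        r = |(((Finset.univ.filter (fun k : Fin N => ∀ i, x k i ≤ y i)).card : ℝ) / N)
              - ∏ i, y i|} := by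
      refine ⟨1, ?_⟩
      rintro r ⟨y, hy, rfl⟩
      have h1 : ((Finset.univ.filter (fun k : Fin N => ∀ i, x k i ≤ y i)).card : ℝ) / N
          ∈ Set.Icc (0 : ℝ) 1 := by
        constructor
        · positivity
        · rw [div_le_one (by positivity)]
          exact_mod_cast (Finset.card_filter_le _ _).trans (Finset.card_fin N).le
      have h2 : (∏ i, y i) ∈ Set.Icc (0 : ℝ) 1 := by
        constructor
        · exact Finset.prod_nonneg fun i _ => (hy i).1
        · exact Finset.prod_le_one (fun i _ => (hy i).1) (fun i _ => (hy i).2)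
      rw [abs_sub_le_iff]
      constructor <;> [linarith [h1.2, h2.1]; linarith [h1.1, h2.2]]
    exact le_csSup hub hmem
  have hr0 : 0 ≤ D ^ ((1 : ℝ) / d) := Real.rpow_nonneg hD0 _
  -- the modulus-of-continuity sup is at most D^(1/d)
  have hS : sSup {r : ℝ | ∃ u, (∀ i, u i ∈ Set.Icc (0 : ℝ) 1) ∧
      ∃ v, (∀ i, v i ∈ Set.Icc (0 : ℝ) 1) ∧
        ‖u - v‖ ≤ D ^ ((1 : ℝ) / d) ∧ r = |f u - f v|} ≤ D ^ ((1 : ℝ) / d) := by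
    refine csSup_le ⟨0, x ⟨0, hN⟩, hx _, x ⟨0, hN⟩, hx _, by simpa using hr0, by simp⟩ ?_
    rintro r ⟨u, hu, v, hv, huv, rfl⟩
    exact (hlip u v).trans huv
  have hP := hProinov f hcont
  have hsum : (∑ k : Fin N, f (x k)) / N = 0 := by
    simp [hfx]
  rw [hsum, sub_zero] at hP
  calc (∫ ξ in {ξ : Fin d → ℝ | ∀ i, ξ i ∈ Set.Icc (0 : ℝ) 1}, f ξ)
      ≤ |∫ ξ in {ξ : Fin d → ℝ | ∀ i, ξ i ∈ Set.Icc (0 : ℝ) 1}, f ξ| := le_abs_self _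
    _ ≤ K * sSup {r : ℝ | ∃ u, (∀ i, u i ∈ Set.Icc (0 : ℝ) 1) ∧
          ∃ v, (∀ i, v i ∈ Set.Icc (0 : ℝ) 1) ∧
            ‖u - v‖ ≤ D ^ ((1 : ℝ) / d) ∧ r = |f u - f v|} := hP
    _ ≤ K * (D ^ ((1 : ℝ) / d)) := mul_le_mul_of_nonneg_left hS hK
end
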